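/- In the Section 7 setting with n ≠ 4 (B the boundary of a 2-dimensional Delzant polytope with n vertices, Γ of twisted type with n−1 interior vertices, corresponding to the tuple (k_1,…,k_n)), there are, up to isomorphism of signed GKM graphs, at most three signed GKM structures compatible with the underlying unsigned GKM graph of Γ: (I) the signed graph Γ itself; (II) only if n is even, the signed structure arising from Γ by changing the sign of the weights of every second pair of basic edges; (III) only if k_i = ±1 for all i, a unique signed structure in which no two basic edges over the same base edge carry the same weight. -/

import Mathlib

open Classical

namespace GKMPaper

/-- `ℤ^m`, the weight lattice. -/
abbrev Zm (m : ℕ) := Fin m → ℤ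

/-- The relation identifying a vector with its negative. -/
def pmRel (m : ℕ) (a b : Zm m) : Prop := a = b ∨ a = -b

theorem pmRel_equiv (m : ℕ) : Equivalence (pmRel m) := by
  constructor
  · intro a; exact Or.inl rfl
  · intro a b hab
    rcases hab with hh | hh
    · exact Or.inl hh.symm
    · exact Or.inr (by rw [hh, neg_neg])
  · intro a b c h1 h2
    rcases h1 with h1 | h1 <;> rcases h2 with h2 | h2
    · exact Or.inl (h1.trans h2)
    · exact Or.inr (h1.trans h2)
    · exact Or.inr (by rw [h1, h2])
    · exact Or.inl (by rw [h1, h2, neg_neg])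

def pmSetoid (m : ℕ) : Setoid (Zm m) := ⟨pmRel m, pmRel_equiv m⟩

/-- `ℤ^m / ±1`. -/
def ZmPM (m : ℕ) := Quotient (pmSetoid m)

/-- The projection `ℤ^m → ℤ^m/±1`. -/
def pm {m : ℕ} (a : Zm m) : ZmPM m := Quotient.mk (pmSetoid m) a

/-- Linear independence over `ℤ`. -/
def Indep {m : ℕ} (a b : Zm m) : Prop :=
  ∀ c d : ℤ, c • a + d • b = 0 → c = 0 ∧ d = 0

/-- An abstract graph with finite vertex and edge sets, each edge occurring with
both orientations, and no loops. -/
structure OrGraph : Type 1 where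
  V : Type
  E : Type
  fV : Fintype V
  fE : Fintype E
  dV : DecidableEq V
  dE : DecidableEq E
  src : E → V
  dst : E → V
  rev : E → E
  rev_rev : ∀ e, rev (rev e) = e
  rev_ne : ∀ e, rev e ≠ e
  src_rev : ∀ e, src (rev e) = dst e
  no_loop : ∀ e, src e ≠ dst e

attribute [instance] OrGraph.fV OrGraph.fE OrGraph.dV OrGraph.dE

/-- A connection on a graph. -/
structure Connection (G : OrGraph) where
  t : G.E → G.E → G.E
  src_t : ∀ e f, G.src f = G.src e → G.src (t e f) = G.dst e
  t_self : ∀ e, t e e = G.rev e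
  t_inv : ∀ e f, G.src f = G.src e → t (G.rev e) (t e f) = f

/-- `k`-valence. -/
def OrGraph.Regular (G : OrGraph) (k : ℕ) : Prop :=
  ∀ v : G.V, Fintype.card {e : G.E // G.src e = v} = k

def OrGraph.Adj (G : OrGraph) (v w : G.V) : Prop :=
  ∃ e, G.src e = v ∧ G.dst e = w

def OrGraph.IsConn (G : OrGraph) : Prop :=
  ∀ v w : G.V, Relation.ReflTransGen G.Adj v w

/-- Compatibility of a connection with an unsigned axial function. -/
def UnsignedCompat {m : ℕ} (G : OrGraph) (α : G.E → ZmPM m) (C : Connection G) : Prop :=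
  (∀ e f : G.E, G.src f = G.src e → e ≠ f →
      ∀ a b : Zm m, pm a = α e → pm b = α f → Indep a b) ∧
  (∀ e f : G.E, G.src f = G.src e →
      ∃ (a g : Zm m) (c : ℤ), pm a = α f ∧ pm g = α e ∧ α (C.t e f) = pm (a + c • g)) ∧
  (∀ e : G.E, α (G.rev e) = α e)

/-- `(G, α)` is an (unsigned) abstract GKM graph of valence `k` with labels in `ℤ^m/±1`. -/
def IsGKM {m : ℕ} (G : OrGraph) (k : ℕ) (α : G.E → ZmPM m) : Prop :=
  G.Regular k ∧ G.IsConn ∧ ∃ C : Connection G, UnsignedCompat G α C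

/-- Compatibility of a connection with a signed axial function. -/
def SignedCompat {m : ℕ} (G : OrGraph) (α : G.E → Zm m) (C : Connection G) : Prop :=
  (∀ e f : G.E, G.src f = G.src e → e ≠ f → Indep (α e) (α f)) ∧
  (∀ e f : G.E, G.src f = G.src e → ∃ c : ℤ, α (C.t e f) = α f + c • α e) ∧
  (∀ e : G.E, α (G.rev e) = - α e)

/-- `(G, α)` is a signed abstract GKM graph of valence `k` with labels in `ℤ^m`. -/
def IsSignedGKM {m : ℕ} (G : OrGraph) (k : ℕ) (α : G.E → Zm m) : Prop :=
  G.Regular k ∧ G.IsConn ∧ ∃ C : Connection G, SignedCompat G α C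

/-- Effectivity of an unsigned GKM graph: at every vertex, the labels of the
outgoing edges lift to a generating set of `ℤ^m`. -/
def Effective {m : ℕ} (G : OrGraph) (α : G.E → ZmPM m) : Prop :=
  ∀ v : G.V, ∃ lift : {e : G.E // G.src e = v} → Zm m,
    (∀ e, pm (lift e) = α e.1) ∧ Submodule.span ℤ (Set.range lift) = ⊤

def SignedEffective {m : ℕ} (G : OrGraph) (α : G.E → Zm m) : Prop :=
  ∀ v : G.V,
    Submodule.span ℤ (Set.range (fun e : {e : G.E // G.src e = v} => α e.1)) = ⊤

/-- A graph fibration: a morphism sending vertices to vertices and horizontal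
edges to edges, bijectively from the horizontal edges at `p` to the edges at `π(p)`. -/
structure GraphFib (G B : OrGraph) where
  onV : G.V → B.V
  onE : G.E → B.E
  src_onE : ∀ e, onV (G.src e) ≠ onV (G.dst e) → B.src (onE e) = onV (G.src e)
  dst_onE : ∀ e, onV (G.src e) ≠ onV (G.dst e) → B.dst (onE e) = onV (G.dst e)
  rev_onE : ∀ e, onV (G.src e) ≠ onV (G.dst e) → onE (G.rev e) = B.rev (onE e)

def GraphFib.Vertical {G B : OrGraph} (π : GraphFib G B) (e : G.E) : Prop :=
  π.onV (G.src e) = π.onV (G.dst e)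

def GraphFib.IsFib {G B : OrGraph} (π : GraphFib G B) : Prop :=
  ∀ p : G.V, Function.Bijective
    (fun e : {e : G.E // G.src e = p ∧ ¬ π.Vertical e} =>
      (⟨π.onE e.1, by rw [π.src_onE e.1 e.2.2, e.2.1]⟩ : {f : B.E // B.src f = π.onV p}))

/-- The extra conditions for a (unsigned) GKM fibration, w.r.t. connections `C`, `CB`. -/
def GKMFibCompat {m : ℕ} {G B : OrGraph} (αΓ : G.E → ZmPM m) (αB : B.E → ZmPM m)
    (π : GraphFib G B) (C : Connection G) (CB : Connection B) : Prop :=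
  (∀ e, ¬ π.Vertical e → αΓ e = αB (π.onE e)) ∧
  (∀ e f, G.src f = G.src e → π.Vertical f → π.Vertical (C.t e f)) ∧
  (∀ e f, G.src f = G.src e → ¬ π.Vertical e → ¬ π.Vertical f →
      ¬ π.Vertical (C.t e f) ∧ π.onE (C.t e f) = CB.t (π.onE e) (π.onE f))

/-- `π` is a GKM fibration of unsigned GKM graphs. -/
def IsGKMFib {m : ℕ} {G B : OrGraph} (αΓ : G.E → ZmPM m) (αB : B.E → ZmPM m)
    (π : GraphFib G B) : Prop :=
  π.IsFib ∧ ∃ (C : Connection G) (CB : Connection B),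
    UnsignedCompat G αΓ C ∧ UnsignedCompat B αB CB ∧ GKMFibCompat αΓ αB π C CB

def SignedGKMFibCompat {m : ℕ} {G B : OrGraph} (sΓ : G.E → Zm m) (sB : B.E → Zm m)
    (π : GraphFib G B) (C : Connection G) (CB : Connection B) : Prop :=
  (∀ e, ¬ π.Vertical e → sΓ e = sB (π.onE e)) ∧
  (∀ e f, G.src f = G.src e → π.Vertical f → π.Vertical (C.t e f)) ∧
  (∀ e f, G.src f = G.src e → ¬ π.Vertical e → ¬ π.Vertical f →
      ¬ π.Vertical (C.t e f) ∧ π.onE (C.t e f) = CB.t (π.onE e) (π.onE f))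

/-- `π` is a signed GKM fibration of signed GKM graphs. -/
def IsSignedGKMFib {m : ℕ} {G B : OrGraph} (sΓ : G.E → Zm m) (sB : B.E → Zm m)
    (π : GraphFib G B) : Prop :=
  π.IsFib ∧ ∃ (C : Connection G) (CB : Connection B),
    SignedCompat G sΓ C ∧ SignedCompat B sB CB ∧ SignedGKMFibCompat sΓ sB π C CB

/-- `(π, ft)` is a fiberwise signed fibration: `ft` is a lift of `αΓ` on the
vertical edges, satisfying the congruence condition w.r.t. suitable connections. -/
def IsFiberwiseSigned {m : ℕ} {G B : OrGraph} (αΓ : G.E → ZmPM m) (αB : B.E → ZmPM m)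
    (π : GraphFib G B) (ft : G.E → Zm m) : Prop :=
  π.IsFib ∧
  (∀ e, π.Vertical e → pm (ft e) = αΓ e) ∧
  (∀ e, π.Vertical e → ft (G.rev e) = - ft e) ∧
  ∃ (C : Connection G) (CB : Connection B),
    UnsignedCompat G αΓ C ∧ UnsignedCompat B αB CB ∧ GKMFibCompat αΓ αB π C CB ∧
    ∀ e f, G.src f = G.src e → π.Vertical f →
      ∃ (g : Zm m) (c : ℤ), pm g = αΓ e ∧ ft (C.t e f) = ft f + c • g

/-- Isomorphism of unsigned GKM graphs. -/
structure GKMIso {m : ℕ} (G : OrGraph) (α : G.E → ZmPM m)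
    (G' : OrGraph) (α' : G'.E → ZmPM m) : Type where
  fV : G.V ≃ G'.V
  fE : G.E ≃ G'.E
  φ : Zm m ≃ₗ[ℤ] Zm m
  src_comm : ∀ e, G'.src (fE e) = fV (G.src e)
  dst_comm : ∀ e, G'.dst (fE e) = fV (G.dst e)
  rev_comm : ∀ e, fE (G.rev e) = G'.rev (fE e)
  lab : ∀ (e : G.E) (a : Zm m), pm a = α e → α' (fE e) = pm (φ a)

/-- Isomorphism of signed GKM graphs. -/
structure SignedGKMIso {m : ℕ} (G : OrGraph) (α : G.E → Zm m)
    (G' : OrGraph) (α' : G'.E → Zm m) : Type where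
  fV : G.V ≃ G'.V
  fE : G.E ≃ G'.E
  φ : Zm m ≃ₗ[ℤ] Zm m
  src_comm : ∀ e, G'.src (fE e) = fV (G.src e)
  dst_comm : ∀ e, G'.dst (fE e) = fV (G.dst e)
  rev_comm : ∀ e, fE (G.rev e) = G'.rev (fE e)
  lab : ∀ e, α' (fE e) = φ (α e)

/-- Equivalence of fiberwise signed fibrations over the same base (identity on `ℤ^m`). -/
structure FSFEquiv {m : ℕ} {G B G' : OrGraph}
    (αΓ : G.E → ZmPM m) (π : GraphFib G B) (ft : G.E → Zm m)
    (αΓ' : G'.E → ZmPM m) (π' : GraphFib G' B) (ft' : G'.E → Zm m) : Type where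
  fV : G.V ≃ G'.V
  fE : G.E ≃ G'.E
  src_comm : ∀ e, G'.src (fE e) = fV (G.src e)
  dst_comm : ∀ e, G'.dst (fE e) = fV (G.dst e)
  rev_comm : ∀ e, fE (G.rev e) = G'.rev (fE e)
  lab : ∀ e, αΓ' (fE e) = αΓ e
  baseV : ∀ p, π'.onV (fV p) = π.onV p
  baseE : ∀ e, ¬ π.Vertical e → π'.onE (fE e) = π.onE e
  fiblab : ∀ e, π.Vertical e → ft' (fE e) = ft e

/-- Equivalence of signed GKM fibrations over the same base (identity on `ℤ^m`). -/
structure SFEquiv {m : ℕ} {G B G' : OrGraph}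
    (sΓ : G.E → Zm m) (π : GraphFib G B)
    (sΓ' : G'.E → Zm m) (π' : GraphFib G' B) : Type where
  fV : G.V ≃ G'.V
  fE : G.E ≃ G'.E
  src_comm : ∀ e, G'.src (fE e) = fV (G.src e)
  dst_comm : ∀ e, G'.dst (fE e) = fV (G.dst e)
  rev_comm : ∀ e, fE (G.rev e) = G'.rev (fE e)
  lab : ∀ e, sΓ' (fE e) = sΓ e
  baseV : ∀ p, π'.onV (fV p) = π.onV p
  baseE : ∀ e, ¬ π.Vertical e → π'.onE (fE e) = π.onE e

/-- Realizing `ℤ²` inside `ℝ² = ℂ`. -/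
noncomputable def toC (a : Zm 2) : ℂ := (a 0 : ℝ) + (a 1 : ℝ) * Complex.I

def cross (a b : ℂ) : ℝ := a.re * b.im - a.im * b.re

/-- A vertex of a signed GKM graph with labels in `ℤ²` is interior if the cone
spanned by the labels of the edges emanating from it is all of `ℝ²`. -/
def InteriorVtx (G : OrGraph) (α : G.E → Zm 2) (p : G.V) : Prop :=
  ∀ x : ℂ, ∃ c : G.E → ℝ, (∀ e, 0 ≤ c e) ∧
    x = ∑ e ∈ Finset.univ.filter (fun e : G.E => G.src e = p), c e • toC (α e)

/-- The angle from `w` to `w'`, represented in `[0, 2π)` if `ε = true`,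
and in `(-2π, 0]` if `ε = false`. -/
noncomputable def angTo (ε : Bool) (w w' : ℂ) : ℝ :=
  if ε then (if (w' / w).arg < 0 then (w' / w).arg + 2 * Real.pi else (w' / w).arg)
  else (if 0 < (w' / w).arg then (w' / w).arg - 2 * Real.pi else (w' / w).arg)

/-- The winding number of a cyclic sequence of vectors w.r.t. the orientation `ε`. -/
noncomputable def winding {nn : ℕ} [NeZero nn] (w : ZMod nn → ℂ) (ε : Bool) : ℝ :=
  (1 / (2 * Real.pi)) * ∑ i : ZMod nn, |angTo ε (w i) (w (i + 1))|

def LocallyConvex {nn : ℕ} (w : ZMod nn → ℂ) : Prop :=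
  (∀ i, angTo true (w i) (w (i + 1)) ∈ Set.Ioo 0 Real.pi) ∨
  (∀ i, angTo false (w i) (w (i + 1)) ∈ Set.Ioo (-Real.pi) 0)

/-- `ε` is the preferred orientation of the locally convex sequence `w`. -/
def Preferred {nn : ℕ} (w : ZMod nn → ℂ) (ε : Bool) : Prop :=
  (ε = true ∧ ∀ i, angTo true (w i) (w (i + 1)) ∈ Set.Ioo 0 Real.pi) ∨
  (ε = false ∧ ∀ i, angTo false (w i) (w (i + 1)) ∈ Set.Ioo (-Real.pi) 0)

/-- `P` lists the vertices of a strictly convex polygon in cyclic order. -/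
def ConvexCyclic {nn : ℕ} (P : ZMod nn → ℂ) : Prop :=
  (∀ i j, j ≠ i → j ≠ i + 1 → 0 < cross (P (i + 1) - P i) (P j - P i)) ∨
  (∀ i j, j ≠ i → j ≠ i + 1 → cross (P (i + 1) - P i) (P j - P i) < 0)

def SubAdj (G : OrGraph) (S : Set G.E) (v w : G.V) : Prop :=
  ∃ e ∈ S, G.src e = v ∧ G.dst e = w

/-- `S` is (the edge set of) a connected `2`-valent signed GKM subgraph of `(G, α)`. -/
def IsSigned2ValentSub (G : OrGraph) (α : G.E → Zm 2) (S : Set G.E) : Prop :=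
  S.Nonempty ∧
  (∀ e ∈ S, G.rev e ∈ S) ∧
  (∀ v : G.V, (∃ e ∈ S, G.src e = v) → Nat.card {e : G.E // e ∈ S ∧ G.src e = v} = 2) ∧
  (∀ v w : G.V, (∃ e ∈ S, G.src e = v) → (∃ e ∈ S, G.src e = w) →
      Relation.ReflTransGen (SubAdj G S) v w) ∧
  ∃ T : G.E → G.E → G.E,
    (∀ e f, e ∈ S → f ∈ S → G.src f = G.src e → T e f ∈ S ∧ G.src (T e f) = G.dst e) ∧
    (∀ e, e ∈ S → T e e = G.rev e) ∧
    (∀ e f, e ∈ S → f ∈ S → G.src f = G.src e → T (G.rev e) (T e f) = f) ∧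
    (∀ e f, e ∈ S → f ∈ S → G.src f = G.src e → ∃ c : ℤ, α (T e f) = α f + c • α e)

/-- A `2`-valent signed GKM subgraph of polytope type: it is a cycle realized by the
boundary edges of a simple convex `2`-polytope, with labels representing the slopes. -/
def IsPolytopeTypeSub (G : OrGraph) (α : G.E → Zm 2) (S : Set G.E) : Prop :=
  IsSigned2ValentSub G α S ∧
  ∃ np : ℕ, 3 ≤ np ∧
    ∃ (cyc : ZMod np → G.E) (P : ZMod np → ℂ) (t : ZMod np → ℝ),
      (∀ i, cyc i ∈ S) ∧
      (∀ ed ∈ S, ∃ i, ed = cyc i ∨ ed = G.rev (cyc i)) ∧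
      (∀ i, G.dst (cyc i) = G.src (cyc (i + 1))) ∧
      ConvexCyclic P ∧
      (∀ i, 0 < t i) ∧
      (∀ i, P (i + 1) - P i = t i • toC (α (cyc i)))

/-- A fibration over an `n`-gon base is of product type if the lifts of a path
once around the base are closed. -/
def ProductType {G B : OrGraph} (π : GraphFib G B) {nn : ℕ} (eB : ZMod nn → B.E) : Prop :=
  ∃ l : ZMod nn → G.E,
    ∀ i, ¬ π.Vertical (l i) ∧ π.onE (l i) = eB i ∧ G.dst (l i) = G.src (l (i + 1))

/-- `ℤ`-indexed `n`-gon data for a `2`-valent base graph. -/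
structure ZGonData (B : OrGraph) (n : ℕ) where
  v : ℤ → B.V
  eB : ℤ → B.E
  v_per : ∀ i, v (i + n) = v i
  e_per : ∀ i, eB (i + n) = eB i
  src_e : ∀ i, B.src (eB i) = v i
  dst_e : ∀ i, B.dst (eB i) = v (i + 1)
  v_inj : ∀ i j : ℤ, 0 ≤ i → i < n → 0 ≤ j → j < n → v i = v j → i = j
  v_surj : ∀ w : B.V, ∃ i : ℤ, v i = w
  e_cover : ∀ ed : B.E, ∃ i : ℤ, ed = eB i ∨ ed = B.rev (eB i)

/-- A choice of sign representatives `γ_i` of the base labels with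
`γ_i ≡ -γ_{i+2} (mod γ_{i+1})` for all `i ∈ ℤ`. -/
structure GammaData {B : OrGraph} {n : ℕ} (αB : B.E → ZmPM 2) (D : ZGonData B n) where
  γ : ℤ → Zm 2
  lift : ∀ i, pm (γ i) = αB (D.eB i)
  cong : ∀ i, ∃ c : ℤ, γ i + γ (i + 2) = c • γ (i + 1)

/-- A fiberwise signed `3`-valent GKM fibration over `(B, αB)`. -/
structure FSFOver (B : OrGraph) (αB : B.E → ZmPM 2) : Type 1 where
  G : OrGraph
  αΓ : G.E → ZmPM 2
  hΓ : IsGKM G 3 αΓ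
  π : GraphFib G B
  ft : G.E → Zm 2
  isfs : IsFiberwiseSigned αΓ αB π ft

def FSFOver.Equiv {B : OrGraph} {αB : B.E → ZmPM 2} (F F' : FSFOver B αB) : Prop :=
  Nonempty (FSFEquiv F.αΓ F.π F.ft F'.αΓ F'.π F'.ft)

/-- A signed `3`-valent GKM fibration over the signed graph `(B, sB)`. -/
structure SFOver (B : OrGraph) (sB : B.E → Zm 2) : Type 1 where
  G : OrGraph
  sΓ : G.E → Zm 2
  hΓ : IsSignedGKM G 3 sΓ
  π : GraphFib G B
  issf : IsSignedGKMFib sΓ sB π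

def SFOver.Equiv {B : OrGraph} {sB : B.E → Zm 2} (F F' : SFOver B sB) : Prop :=
  Nonempty (SFEquiv F.sΓ F.π F'.sΓ F'.π)

/-- The fibration `F` realizes the classification datum `([k], η)` w.r.t. the fixed data. -/
def RealizesFS {B : OrGraph} {αB : B.E → ZmPM 2} {n : ℕ} (D : ZGonData B n)
    (Γd : GammaData αB D) (F : FSFOver B αB) (k : ZMod n → ℤ) (η : Bool) : Prop :=
  (η = false ↔ ProductType F.π (fun i : ZMod n => D.eB i.val)) ∧
  ∃ (gE : ℤ → F.G.E) (αf : ℤ → Zm 2) (kk : ℤ → ℤ),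
    (∀ i, F.π.Vertical (gE i)) ∧
    (∀ i, F.π.onV (F.G.src (gE i)) = D.v i) ∧
    (∀ i, gE (i + n) = gE i ∨ gE (i + n) = F.G.rev (gE i)) ∧
    (∀ i, pm (αf i) = F.αΓ (gE i)) ∧
    (∀ i, ∃ c : ℤ, αf (i + 1) = αf i + c • Γd.γ i) ∧
    (∀ i, αf i = kk i • Γd.γ (i - 1) - kk (i - 1) • Γd.γ i) ∧
    (∀ i, kk i ≠ 0) ∧
    (∀ i : ZMod n, k i = kk i.val)

/-- The signed fibration `F` realizes the classification datum `([k], η)`. -/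
def RealizesS {B : OrGraph} (sB : B.E → Zm 2) {αB : B.E → ZmPM 2} {n : ℕ}
    (D : ZGonData B n) (Γd : GammaData αB D) (F : SFOver B sB)
    (k : ZMod n → ℤ) (η : Bool) : Prop :=
  (η = false ↔ ProductType F.π (fun i : ZMod n => D.eB i.val)) ∧
  ∃ (gE : ℤ → F.G.E) (αf : ℤ → Zm 2) (kk : ℤ → ℤ),
    (∀ i, F.π.Vertical (gE i)) ∧
    (∀ i, F.π.onV (F.G.src (gE i)) = D.v i) ∧
    (∀ i, gE (i + n) = gE i ∨ gE (i + n) = F.G.rev (gE i)) ∧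
    (∀ i, pm (αf i) = pm (F.sΓ (gE i))) ∧
    (∀ i, ∃ c : ℤ, αf (i + 1) = αf i + c • Γd.γ i) ∧
    (∀ i, αf i = kk i • Γd.γ (i - 1) - kk (i - 1) • Γd.γ i) ∧
    (∀ i, kk i ≠ 0) ∧
    (∀ i : ZMod n, k i = kk i.val)

def KRel (n : ℕ) (a b : {k : ZMod n → ℤ // ∀ i, k i ≠ 0}) : Prop :=
  a.1 = b.1 ∨ a.1 = - b.1

/-- `((ℤ∖{0})^n)/±1`. -/
def KClass (n : ℕ) := Quot (KRel n)

/-- The Section 7 setting: a signed GKM fibration of twisted type of a `3`-valent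
signed GKM graph `Γ` over `B`, the boundary of a 2-dimensional Delzant polytope with
`n` vertices, with `Γ` having `n-1` interior vertices; with the basic edges `f i`, `h i`
over `e i` and the fiber edges `g i`. -/
structure Section7 : Type 1 where
  n : ℕ
  hn : 3 ≤ n
  G : OrGraph
  B : OrGraph
  aG : G.E → Zm 2
  aB : B.E → Zm 2
  hG : IsSignedGKM G 3 aG
  hB : IsSignedGKM B 2 aB
  π : GraphFib G B
  hfib : IsSignedGKMFib aG aB π
  v : ZMod n → B.V
  e : ZMod n → B.E
  v_bij : Function.Bijective v
  src_e : ∀ i, B.src (e i) = v i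
  dst_e : ∀ i, B.dst (e i) = v (i + 1)
  e_cover : ∀ ed : B.E, ∃ i, ed = e i ∨ ed = B.rev (e i)
  P : ZMod n → ℂ
  tl : ZMod n → ℝ
  tl_pos : ∀ i, 0 < tl i
  polygon : ConvexCyclic P
  slope : ∀ i, P (i + 1) - P i = tl i • toC (aB (e i))
  delzant : ∀ i, (aB (e (i - 1)) 0) * (aB (e i) 1) - (aB (e (i - 1)) 1) * (aB (e i) 0) = 1 ∨
                 (aB (e (i - 1)) 0) * (aB (e i) 1) - (aB (e (i - 1)) 1) * (aB (e i) 0) = -1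
  f : ZMod n → G.E
  h : ZMod n → G.E
  g : ZMod n → G.E
  f_horiz : ∀ i, ¬ π.Vertical (f i)
  h_horiz : ∀ i, ¬ π.Vertical (h i)
  f_over : ∀ i, π.onE (f i) = e i
  h_over : ∀ i, π.onE (h i) = e i
  f_ne_h : ∀ i, f i ≠ h i
  g_vert : ∀ i, π.Vertical (g i)
  g_src : ∀ i, G.src (g i) = G.src (f i)
  g_dst : ∀ i, G.dst (g i) = G.src (h i)
  chain_f : ∀ i : ZMod n, i + 1 ≠ 0 → G.dst (f i) = G.src (f (i + 1))
  chain_h : ∀ i : ZMod n, i + 1 ≠ 0 → G.dst (h i) = G.src (h (i + 1))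
  twist_f : G.dst (f (-1)) = G.src (h 0)
  twist_h : G.dst (h (-1)) = G.src (f 0)
  k : ZMod n → ℤ
  k_ne : ∀ i, k i ≠ 0
  fiberweight : ∀ i, aG (g i) =
    k i • aB (e (i - 1)) - (if i = 0 then - k (i - 1) else k (i - 1)) • aB (e i)
  interior_count : Nat.card {p : G.V // InteriorVtx G aG p} = n - 1

/-- The type II signed structure: the signs of the labels of every second pair
of basic edges are reversed. -/
noncomputable def Section7.alphaII (S : Section7) : S.G.E → Zm 2 :=
  fun ed =>
    if ∃ i : ZMod S.n, Odd i.val ∧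
        (ed = S.f i ∨ ed = S.h i ∨ ed = S.G.rev (S.f i) ∨ ed = S.G.rev (S.h i))
    then - S.aG ed else S.aG ed


/-! ### Auxiliary development for Statement 18 -/

section Statement18Aux

instance section7_nezero (S : Section7) : NeZero S.n := ⟨by have := S.hn; omega⟩

/-- 2x2 determinant on `ℤ²`. -/
def det2 (a b : Zm 2) : ℤ := a 0 * b 1 - a 1 * b 0

lemma det2_linc {X Y Z : Zm 2} (w : Zm 2) (c : ℤ) (h : X = Y + c • Z) :
    det2 X w = det2 Y w + c * det2 Z w := by
  subst h
  simp only [det2, Pi.add_apply, Pi.smul_apply, smul_eq_mul]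
  ring

lemma det2_smul_l (r : ℤ) (a b : Zm 2) : det2 (r • a) b = r * det2 a b := by
  simp only [det2, Pi.smul_apply, smul_eq_mul]; ring

lemma det2_smul_r (r : ℤ) (a b : Zm 2) : det2 a (r • b) = r * det2 a b := by
  simp only [det2, Pi.smul_apply, smul_eq_mul]; ring

lemma det2_neg_l (a b : Zm 2) : det2 (-a) b = -det2 a b := by
  simp only [det2, Pi.neg_apply]; ring

lemma det2_neg_r (a b : Zm 2) : det2 a (-b) = -det2 a b := by
  simp only [det2, Pi.neg_apply]; ring

lemma det2_self (a : Zm 2) : det2 a a = 0 := by simp only [det2]; ring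

lemma det2_anti (a b : Zm 2) : det2 a b = -det2 b a := by simp only [det2]; ring

namespace Section7

variable (S : Section7)

/-- The weights of the base edges. -/
def gam (i : ZMod S.n) : Zm 2 := S.aB (S.e i)

/-- The "previous k" appearing in the fiber weight. -/
def kp (i : ZMod S.n) : ℤ := if i = 0 then -(S.k (i-1)) else S.k (i-1)

/-- The determinant of consecutive base weights. -/
def Dt (i : ZMod S.n) : ℤ := det2 (S.gam (i-1)) (S.gam i)

lemma Dt_unit (i : ZMod S.n) : S.Dt i = 1 ∨ S.Dt i = -1 := S.delzant i

lemma Dt_ne (i : ZMod S.n) : S.Dt i ≠ 0 := by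
  rcases S.Dt_unit i with h | h <;> rw [h] <;> decide

lemma Dt_sq (i : ZMod S.n) : S.Dt i * S.Dt i = 1 := by
  rcases S.Dt_unit i with h | h <;> rw [h] <;> decide

lemma kp_ne (i : ZMod S.n) : S.kp i ≠ 0 := by
  unfold kp; split
  · simp [S.k_ne]
  · exact S.k_ne _

lemma ag_expand (i : ZMod S.n) :
    S.aG (S.g i) = S.k i • S.gam (i-1) + (-(S.kp i)) • S.gam i := by
  rw [S.fiberweight i, neg_smul, ← sub_eq_add_neg]
  rfl

lemma det2_gam_gam (i : ZMod S.n) : det2 (S.gam (i-1)) (S.gam i) = S.Dt i := rfl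

/-- `det2 (aG (g i)) (gam i)` -/
lemma dag_r (i : ZMod S.n) : det2 (S.aG (S.g i)) (S.gam i) = S.k i * S.Dt i := by
  rw [det2_linc (S.gam i) (-(S.kp i)) (S.ag_expand i), det2_smul_l, det2_gam_gam,
    det2_self]
  ring

/-- `det2 (gam (i-1)) (aG (g i))` -/
lemma dag_l (i : ZMod S.n) :
    det2 (S.gam (i-1)) (S.aG (S.g i)) = -(S.kp i) * S.Dt i := by
  rw [det2_anti, det2_linc (S.gam (i-1)) (-(S.kp i)) (S.ag_expand i), det2_smul_l,
    det2_self, det2_anti (S.gam i), det2_gam_gam]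
  ring

/-- `det2 (aG (g i)) (gam (i-1))` -/
lemma dag_prev (i : ZMod S.n) :
    det2 (S.aG (S.g i)) (S.gam (i-1)) = S.kp i * S.Dt i := by
  rw [det2_linc (S.gam (i-1)) (-(S.kp i)) (S.ag_expand i), det2_smul_l, det2_self,
    det2_anti (S.gam i), det2_gam_gam]
  ring

end Section7

end Statement18Aux

section Statement18Graph

lemma card3_cases {α : Type} [Fintype α] [DecidableEq α] (hcard : Fintype.card α = 3)
    (a b c : α) (hab : a ≠ b) (hac : a ≠ c) (hbc : b ≠ c) (x : α) :
    x = a ∨ x = b ∨ x = c := by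
  by_contra hx
  push_neg at hx
  have h4 : ({x, a, b, c} : Finset α).card = 4 := by
    rw [Finset.card_insert_of_notMem (by simp [hx.1, hx.2.1, hx.2.2]),
        Finset.card_insert_of_notMem (by simp [hab, hac]),
        Finset.card_insert_of_notMem (by simp [hbc])]
    simp
  have h5 : ({x, a, b, c} : Finset α).card ≤ Fintype.card α := Finset.card_le_univ _
  omega

lemma OrGraph.rev_dst (G : OrGraph) (ed : G.E) : G.dst (G.rev ed) = G.src ed := by
  conv_rhs => rw [← G.rev_rev ed]
  rw [G.src_rev]

lemma GraphFib.vert_rev {G B : OrGraph} (π : GraphFib G B) (ed : G.E) :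
    π.Vertical (G.rev ed) ↔ π.Vertical ed := by
  unfold GraphFib.Vertical
  rw [G.src_rev, G.rev_dst]
  exact eq_comm

namespace Section7

variable (S : Section7)

lemma aG_rev (ed : S.G.E) : S.aG (S.G.rev ed) = -S.aG ed := by
  obtain ⟨-, C, CB, scG, -, -⟩ := S.hfib
  exact scG.2.2 ed

lemma aG_f (i : ZMod S.n) : S.aG (S.f i) = S.gam i := by
  obtain ⟨-, C, CB, -, -, cmp⟩ := S.hfib
  rw [cmp.1 _ (S.f_horiz i), S.f_over]
  rfl

lemma aG_h (i : ZMod S.n) : S.aG (S.h i) = S.gam i := by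
  obtain ⟨-, C, CB, -, -, cmp⟩ := S.hfib
  rw [cmp.1 _ (S.h_horiz i), S.h_over]
  rfl

lemma onV_p (i : ZMod S.n) : S.π.onV (S.G.src (S.f i)) = S.v i := by
  have h1 := S.π.src_onE (S.f i) (S.f_horiz i)
  rw [S.f_over, S.src_e] at h1
  exact h1.symm

lemma onV_q (i : ZMod S.n) : S.π.onV (S.G.src (S.h i)) = S.v i := by
  have h1 := S.π.src_onE (S.h i) (S.h_horiz i)
  rw [S.h_over, S.src_e] at h1
  exact h1.symm

lemma p_inj {i j : ZMod S.n} (h : S.G.src (S.f i) = S.G.src (S.f j)) : i = j := by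
  apply S.v_bij.1
  rw [← S.onV_p, ← S.onV_p, h]

lemma q_inj {i j : ZMod S.n} (h : S.G.src (S.h i) = S.G.src (S.h j)) : i = j := by
  apply S.v_bij.1
  rw [← S.onV_q, ← S.onV_q, h]

lemma regular3 (w : S.G.V) : Fintype.card {ed : S.G.E // S.G.src ed = w} = 3 :=
  S.hG.1 w

lemma p_ne_q (i j : ZMod S.n) : S.G.src (S.f i) ≠ S.G.src (S.h j) := by
  intro heq
  have hij : i = j := by
    apply S.v_bij.1
    rw [← S.onV_p, ← S.onV_q, heq]
  subst hij
  -- four distinct edges at one vertex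
  have hsg : S.G.src (S.g i) = S.G.src (S.f i) := S.g_src i
  have hsrg : S.G.src (S.G.rev (S.g i)) = S.G.src (S.f i) := by
    rw [S.G.src_rev, S.g_dst, ← heq]
  have hsh : S.G.src (S.h i) = S.G.src (S.f i) := heq.symm
  have hfg : S.f i ≠ S.g i := fun hh => S.f_horiz i (hh ▸ S.g_vert i)
  have hhg : S.h i ≠ S.g i := fun hh => S.h_horiz i (hh ▸ S.g_vert i)
  have hfrg : S.f i ≠ S.G.rev (S.g i) := by
    intro hh
    exact S.f_horiz i (by rw [hh, S.π.vert_rev]; exact S.g_vert i)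
  have hhrg : S.h i ≠ S.G.rev (S.g i) := by
    intro hh
    exact S.h_horiz i (by rw [hh, S.π.vert_rev]; exact S.g_vert i)
  have h3 := card3_cases (S.regular3 (S.G.src (S.f i)))
    (⟨S.f i, rfl⟩ : {ed : S.G.E // S.G.src ed = S.G.src (S.f i)})
    ⟨S.h i, hsh⟩ ⟨S.g i, hsg⟩
    (by simp [Subtype.ext_iff]; exact S.f_ne_h i)
    (by simp [Subtype.ext_iff]; exact hfg)
    (by simp [Subtype.ext_iff]; exact hhg)
    ⟨S.G.rev (S.g i), hsrg⟩
  simp only [Subtype.ext_iff] at h3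
  rcases h3 with hh | hh | hh
  · exact hfrg hh.symm
  · exact hhrg hh.symm
  · exact S.G.rev_ne (S.g i) hh

/-- The third edge at `src (f i)`. -/
def prevP (i : ZMod S.n) : S.G.E :=
  if i = 0 then S.G.rev (S.h (i-1)) else S.G.rev (S.f (i-1))

/-- The third edge at `src (h i)`. -/
def prevQ (i : ZMod S.n) : S.G.E :=
  if i = 0 then S.G.rev (S.f (i-1)) else S.G.rev (S.h (i-1))

lemma src_prevP (i : ZMod S.n) : S.G.src (S.prevP i) = S.G.src (S.f i) := by
  unfold prevP
  split
  · next hi =>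
      subst hi
      rw [S.G.src_rev, zero_sub, S.twist_h]
  · next hi =>
      rw [S.G.src_rev, S.chain_f (i-1) (by rwa [sub_add_cancel]), sub_add_cancel]

lemma src_prevQ (i : ZMod S.n) : S.G.src (S.prevQ i) = S.G.src (S.h i) := by
  unfold prevQ
  split
  · next hi =>
      subst hi
      rw [S.G.src_rev, zero_sub, S.twist_f]
  · next hi =>
      rw [S.G.src_rev, S.chain_h (i-1) (by rwa [sub_add_cancel]), sub_add_cancel]

lemma aG_prevP (i : ZMod S.n) : S.aG (S.prevP i) = -S.gam (i-1) := by
  unfold prevP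
  split <;> rw [S.aG_rev] <;> [rw [S.aG_h]; rw [S.aG_f]]

lemma aG_prevQ (i : ZMod S.n) : S.aG (S.prevQ i) = -S.gam (i-1) := by
  unfold prevQ
  split <;> rw [S.aG_rev] <;> [rw [S.aG_f]; rw [S.aG_h]]

lemma nonvert_prevP (i : ZMod S.n) : ¬ S.π.Vertical (S.prevP i) := by
  unfold prevP
  split
  · rw [S.π.vert_rev]; exact S.h_horiz _
  · rw [S.π.vert_rev]; exact S.f_horiz _

lemma nonvert_prevQ (i : ZMod S.n) : ¬ S.π.Vertical (S.prevQ i) := by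
  unfold prevQ
  split
  · rw [S.π.vert_rev]; exact S.f_horiz _
  · rw [S.π.vert_rev]; exact S.h_horiz _

lemma gam_ne_neg (i : ZMod S.n) : S.gam i ≠ -S.gam (i-1) := by
  intro hh
  apply S.Dt_ne i
  have : S.Dt i = det2 (S.gam (i-1)) (S.gam i) := rfl
  rw [this, hh, det2_neg_r, det2_self]
  ring

lemma f_ne_prevP (i : ZMod S.n) : S.f i ≠ S.prevP i := by
  intro hh
  apply S.gam_ne_neg i
  rw [← S.aG_f i, ← S.aG_prevP i, hh]

lemma h_ne_prevQ (i : ZMod S.n) : S.h i ≠ S.prevQ i := by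
  intro hh
  apply S.gam_ne_neg i
  rw [← S.aG_h i, ← S.aG_prevQ i, hh]

lemma f_ne_g (i : ZMod S.n) : S.f i ≠ S.g i :=
  fun hh => S.f_horiz i (hh ▸ S.g_vert i)

lemma g_ne_prevP (i : ZMod S.n) : S.g i ≠ S.prevP i := by
  intro hh
  exact S.nonvert_prevP i (hh ▸ S.g_vert i)

lemma h_ne_revg (i : ZMod S.n) : S.h i ≠ S.G.rev (S.g i) := by
  intro hh
  exact S.h_horiz i (by rw [hh, S.π.vert_rev]; exact S.g_vert i)

lemma revg_ne_prevQ (i : ZMod S.n) : S.G.rev (S.g i) ≠ S.prevQ i := by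
  intro hh
  exact S.nonvert_prevQ i (hh ▸ (S.π.vert_rev (S.g i)).mpr (S.g_vert i))

lemma star_p (i : ZMod S.n) {E : S.G.E} (hE : S.G.src E = S.G.src (S.f i)) :
    E = S.f i ∨ E = S.g i ∨ E = S.prevP i := by
  have h3 := card3_cases (S.regular3 (S.G.src (S.f i)))
    (⟨S.f i, rfl⟩ : {ed : S.G.E // S.G.src ed = S.G.src (S.f i)})
    ⟨S.g i, S.g_src i⟩ ⟨S.prevP i, S.src_prevP i⟩
    (by simp [Subtype.ext_iff]; exact S.f_ne_g i)
    (by simp [Subtype.ext_iff]; exact S.f_ne_prevP i)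
    (by simp [Subtype.ext_iff]; exact S.g_ne_prevP i)
    ⟨E, hE⟩
  simpa only [Subtype.ext_iff] using h3

lemma star_q (i : ZMod S.n) {E : S.G.E} (hE : S.G.src E = S.G.src (S.h i)) :
    E = S.h i ∨ E = S.G.rev (S.g i) ∨ E = S.prevQ i := by
  have hsrg : S.G.src (S.G.rev (S.g i)) = S.G.src (S.h i) := by
    rw [S.G.src_rev, S.g_dst]
  have h3 := card3_cases (S.regular3 (S.G.src (S.h i)))
    (⟨S.h i, rfl⟩ : {ed : S.G.E // S.G.src ed = S.G.src (S.h i)})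
    ⟨S.G.rev (S.g i), hsrg⟩ ⟨S.prevQ i, S.src_prevQ i⟩
    (by simp [Subtype.ext_iff]; exact S.h_ne_revg i)
    (by simp [Subtype.ext_iff]; exact S.h_ne_prevQ i)
    (by simp [Subtype.ext_iff]; exact S.revg_ne_prevQ i)
    ⟨E, hE⟩
  simpa only [Subtype.ext_iff] using h3

lemma vertex_cases (w : S.G.V) :
    ∃ i, w = S.G.src (S.f i) ∨ w = S.G.src (S.h i) := by
  have hconn : S.G.IsConn := S.hG.2.1
  have hrt := hconn (S.G.src (S.f 0)) w
  induction hrt with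
  | refl => exact ⟨0, Or.inl rfl⟩
  | tail hrt hadj ih =>
      obtain ⟨ed, hsrc, hdst⟩ := hadj
      obtain ⟨i, hi | hi⟩ := ih
      · rw [hi] at hsrc
        rcases S.star_p i hsrc with hed | hed | hed
        · subst hed
          by_cases hi1 : i + 1 = 0
          · have hi' : i = -1 := eq_neg_of_add_eq_zero_left hi1
            subst hi'
            rw [S.twist_f] at hdst
            exact ⟨0, Or.inr hdst.symm⟩
          · rw [S.chain_f i hi1] at hdst
            exact ⟨i + 1, Or.inl hdst.symm⟩
        · subst hed
          rw [S.g_dst] at hdst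
          exact ⟨i, Or.inr hdst.symm⟩
        · subst hed
          unfold prevP at hdst
          by_cases hi0 : i = 0
          · rw [if_pos hi0, S.G.rev_dst] at hdst
            exact ⟨i - 1, Or.inr hdst.symm⟩
          · rw [if_neg hi0, S.G.rev_dst] at hdst
            exact ⟨i - 1, Or.inl hdst.symm⟩
      · rw [hi] at hsrc
        rcases S.star_q i hsrc with hed | hed | hed
        · subst hed
          by_cases hi1 : i + 1 = 0
          · have hi' : i = -1 := eq_neg_of_add_eq_zero_left hi1
            subst hi'
            rw [S.twist_h] at hdst
            exact ⟨0, Or.inl hdst.symm⟩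
          · rw [S.chain_h i hi1] at hdst
            exact ⟨i + 1, Or.inr hdst.symm⟩
        · subst hed
          rw [S.G.rev_dst, S.g_src] at hdst
          exact ⟨i, Or.inl hdst.symm⟩
        · subst hed
          unfold prevQ at hdst
          by_cases hi0 : i = 0
          · rw [if_pos hi0, S.G.rev_dst] at hdst
            exact ⟨i - 1, Or.inl hdst.symm⟩
          · rw [if_neg hi0, S.G.rev_dst] at hdst
            exact ⟨i - 1, Or.inr hdst.symm⟩

lemma edge_cases (E : S.G.E) :
    ∃ i, E = S.f i ∨ E = S.h i ∨ E = S.g i ∨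
      E = S.G.rev (S.f i) ∨ E = S.G.rev (S.h i) ∨ E = S.G.rev (S.g i) := by
  obtain ⟨i, hw | hw⟩ := S.vertex_cases (S.G.src E)
  · rcases S.star_p i hw with hE | hE | hE
    · exact ⟨i, Or.inl hE⟩
    · exact ⟨i, Or.inr (Or.inr (Or.inl hE))⟩
    · unfold prevP at hE
      by_cases hi0 : i = 0
      · rw [if_pos hi0] at hE
        exact ⟨i - 1, Or.inr (Or.inr (Or.inr (Or.inr (Or.inl hE))))⟩
      · rw [if_neg hi0] at hE
        exact ⟨i - 1, Or.inr (Or.inr (Or.inr (Or.inl hE)))⟩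
  · rcases S.star_q i hw with hE | hE | hE
    · exact ⟨i, Or.inr (Or.inl hE)⟩
    · exact ⟨i, Or.inr (Or.inr (Or.inr (Or.inr (Or.inr hE))))⟩
    · unfold prevQ at hE
      by_cases hi0 : i = 0
      · rw [if_pos hi0] at hE
        exact ⟨i - 1, Or.inr (Or.inr (Or.inr (Or.inl hE)))⟩
      · rw [if_neg hi0] at hE
        exact ⟨i - 1, Or.inr (Or.inr (Or.inr (Or.inr (Or.inl hE))))⟩

end Section7

end Statement18Graph

section Statement18SData

lemma det2_linc_r {X Y Z : Zm 2} (w : Zm 2) (c : ℤ) (h : X = Y + c • Z) :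
    det2 w X = det2 w Y + c * det2 w Z := by
  subst h
  simp only [det2, Pi.add_apply, Pi.smul_apply, smul_eq_mul]
  ring

lemma zmod_all {n : ℕ} [NeZero n] (Q : ZMod n → Prop)
    (h : ∀ m : ℕ, m < n → Q (m : ZMod n)) : ∀ i, Q i := by
  intro i
  have h2 := h i.val (ZMod.val_lt i)
  rwa [ZMod.natCast_val, ZMod.cast_id] at h2

lemma zmod_cast_succ_ne {n : ℕ} [NeZero n] {m : ℕ} (h1 : m + 1 < n) :
    ((m : ZMod n) + 1) ≠ 0 := by
  have : (((m+1 : ℕ)) : ZMod n) ≠ 0 := by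
    rw [Ne, ZMod.natCast_eq_zero_iff]
    intro hdvd
    have := Nat.le_of_dvd (by omega) hdvd
    omega
  rwa [Nat.cast_add, Nat.cast_one] at this

lemma zmod_cast_ne_zero {n : ℕ} [NeZero n] {m : ℕ} (h0 : 0 < m) (h1 : m < n) :
    ((m : ZMod n)) ≠ 0 := by
  rw [Ne, ZMod.natCast_eq_zero_iff]
  intro hdvd
  have := Nat.le_of_dvd (by omega) hdvd
  omega

lemma conn_inj {G : OrGraph} (C : Connection G) {e f f' : G.E}
    (hf : G.src f = G.src e) (hf' : G.src f' = G.src e)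
    (h : C.t e f = C.t e f') : f = f' := by
  have h1 := C.t_inv e f hf
  have h2 := C.t_inv e f' hf'
  rw [← h1, ← h2, h]

lemma conn_ne_rev {G : OrGraph} (C : Connection G) {e f : G.E}
    (hf : G.src f = G.src e) (hne : f ≠ e) : C.t e f ≠ G.rev e := by
  intro hh
  apply hne
  exact conn_inj C hf rfl (hh.trans (C.t_self e).symm)

namespace Section7

variable (S : Section7)

lemma kp_succ (i : ZMod S.n) (h : i + 1 ≠ 0) : S.kp (i+1) = S.k i := by
  unfold kp
  rw [if_neg h, add_sub_cancel_right]

lemma kp_zero : S.kp 0 = -S.k (-1) := by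
  unfold kp
  rw [if_pos rfl, zero_sub]

lemma det2_gam_succ (i : ZMod S.n) : det2 (S.gam i) (S.gam (i+1)) = S.Dt (i+1) := by
  unfold Dt
  rw [add_sub_cancel_right]

lemma dag_prev' (i : ZMod S.n) :
    det2 (S.aG (S.g (i+1))) (S.gam i) = S.kp (i+1) * S.Dt (i+1) := by
  have h2 := S.dag_prev (i+1)
  rwa [add_sub_cancel_right] at h2

lemma Dt_succ (i : ZMod S.n) : S.Dt (i+1) = S.Dt i := by
  obtain ⟨-, C, CB, scG, -, cmp⟩ := S.hfib
  by_cases hi1 : i + 1 = 0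
  · have hi' : i = -1 := eq_neg_of_add_eq_zero_left hi1
    subst hi'
    set E := C.t (S.f (-1)) (S.g (-1)) with hE
    have hsrc : S.G.src (S.g (-1)) = S.G.src (S.f (-1)) := S.g_src _
    have hvert : S.π.Vertical E := cmp.2.1 _ _ hsrc (S.g_vert _)
    have hsrcE : S.G.src E = S.G.src (S.h 0) := by
      rw [C.src_t _ _ hsrc, S.twist_f]
    have hE1 : E = S.G.rev (S.g 0) := by
      rcases S.star_q 0 hsrcE with hh | hh | hh
      · exact absurd (hh ▸ hvert) (S.h_horiz 0)
      · exact hh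
      · exact absurd (hh ▸ hvert) (S.nonvert_prevQ 0)
    obtain ⟨cc, hcc⟩ := scG.2.1 (S.f (-1)) (S.g (-1)) hsrc
    rw [hE1] at hE
    rw [← hE, S.aG_rev, S.aG_f] at hcc
    have hcc' : (-1 : ℤ) • S.aG (S.g 0) = S.aG (S.g (-1)) + cc • S.gam (-1) := by
      rw [neg_one_smul]; exact hcc
    have hv := S.dag_prev 0
    rw [zero_sub] at hv
    have d1 := det2_linc (S.gam (-1)) cc hcc'
    rw [det2_smul_l, hv, S.dag_r, det2_self, S.kp_zero] at d1
    have hgoal : S.Dt 0 = S.Dt (-1) := by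
      have hk := S.k_ne (-1)
      have h3 : S.k (-1) * S.Dt 0 = S.k (-1) * S.Dt (-1) := by linarith
      exact mul_left_cancel₀ hk h3
    rw [neg_add_cancel]
    exact hgoal
  · set E := C.t (S.f i) (S.g i) with hE
    have hsrc : S.G.src (S.g i) = S.G.src (S.f i) := S.g_src _
    have hvert : S.π.Vertical E := cmp.2.1 _ _ hsrc (S.g_vert _)
    have hsrcE : S.G.src E = S.G.src (S.f (i+1)) := by
      rw [C.src_t _ _ hsrc, S.chain_f i hi1]
    have hE1 : E = S.g (i+1) := by
      rcases S.star_p (i+1) hsrcE with hh | hh | hh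
      · exact absurd (hh ▸ hvert) (S.f_horiz (i+1))
      · exact hh
      · exact absurd (hh ▸ hvert) (S.nonvert_prevP (i+1))
    obtain ⟨cc, hcc⟩ := scG.2.1 (S.f i) (S.g i) hsrc
    rw [hE1] at hE
    rw [← hE, S.aG_f] at hcc
    have d1 := det2_linc (S.gam i) cc hcc
    rw [S.dag_prev' i, S.dag_r i, det2_self, S.kp_succ i hi1] at d1
    have hk := S.k_ne i
    have : S.k i * S.Dt (i+1) = S.k i * S.Dt i := by linarith
    exact mul_left_cancel₀ hk this

lemma Dt_all (i : ZMod S.n) : S.Dt i = S.Dt 0 := by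
  have H : ∀ m : ℕ, S.Dt ((m : ZMod S.n)) = S.Dt 0 := by
    intro m
    induction m with
    | zero => simp
    | succ m2 ih =>
        have h3 : ((m2+1 : ℕ) : ZMod S.n) = (m2 : ZMod S.n) + 1 := by push_cast; ring
        rw [h3, S.Dt_succ]
        exact ih
  exact zmod_all (fun j => S.Dt j = S.Dt 0) (fun m _ => H m) i

end Section7

end Statement18SData

section Statement18Transport

lemma unit_right {x y : ℤ} (hxy : x * y = 1 ∨ x * y = -1) : y = 1 ∨ y = -1 := by
  have hu : IsUnit (x * y) := by
    rcases hxy with h | h <;> rw [h]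
    · exact isUnit_one
    · exact Int.isUnit_iff.mpr (Or.inr rfl)
  exact Int.isUnit_iff.mp (isUnit_of_mul_isUnit_right hu)

lemma pmone_ne {x : ℤ} (h : x = 1 ∨ x = -1) : x ≠ 0 := by
  rcases h with h | h <;> rw [h] <;> decide

lemma pm_eq_cases {a b : Zm 2} (h : pm a = pm b) : a = b ∨ a = -b :=
  Quotient.exact h

namespace Section7

lemma gam_ne_zero (S : Section7) (i : ZMod S.n) : S.gam i ≠ 0 := by
  intro hh
  apply S.Dt_ne i
  unfold Dt
  rw [hh]
  simp [det2]

/-- A sign decomposition of a compatible signed structure `al` on `Γ`. -/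
structure SData (S : Section7) where
  al : S.G.E → Zm 2
  C : Connection S.G
  compat : SignedCompat S.G al C
  a : ZMod S.n → ℤ
  b : ZMod S.n → ℤ
  c : ZMod S.n → ℤ
  hau : ∀ i, a i = 1 ∨ a i = -1
  hbu : ∀ i, b i = 1 ∨ b i = -1
  hcu : ∀ i, c i = 1 ∨ c i = -1
  ha : ∀ i, al (S.f i) = a i • S.gam i
  hb : ∀ i, al (S.h i) = b i • S.gam i
  hc : ∀ i, al (S.g i) = c i • S.aG (S.g i)

/-- Build a sign decomposition from a compatible signed structure inducing the same
unsigned structure. -/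
noncomputable def mkSData (S : Section7) (α' : S.G.E → Zm 2)
    (hcompat : ∃ C : Connection S.G, SignedCompat S.G α' C)
    (hsame : ∀ ed, pm (α' ed) = pm (S.aG ed)) : SData S where
  al := α'
  C := hcompat.choose
  compat := hcompat.choose_spec
  a := fun i => if α' (S.f i) = S.gam i then 1 else -1
  b := fun i => if α' (S.h i) = S.gam i then 1 else -1
  c := fun i => if α' (S.g i) = S.aG (S.g i) then 1 else -1
  hau := fun i => by split <;> simp
  hbu := fun i => by split <;> simp
  hcu := fun i => by split <;> simp
  ha := by
    intro i
    split
    · next hh => rw [one_smul]; exact hh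
    · next hh =>
        rcases pm_eq_cases (hsame (S.f i)) with h2 | h2
        · rw [S.aG_f] at h2; exact absurd h2 hh
        · rw [S.aG_f] at h2; rw [h2, neg_one_smul]
  hb := by
    intro i
    split
    · next hh => rw [one_smul]; exact hh
    · next hh =>
        rcases pm_eq_cases (hsame (S.h i)) with h2 | h2
        · rw [S.aG_h] at h2; exact absurd h2 hh
        · rw [S.aG_h] at h2; rw [h2, neg_one_smul]
  hc := by
    intro i
    split
    · next hh => rw [one_smul]; exact hh
    · next hh =>
        rcases pm_eq_cases (hsame (S.g i)) with h2 | h2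
        · exact absurd h2 hh
        · rw [h2, neg_one_smul]

namespace SData

variable {S : Section7} (X : SData S)

lemma alrev (ed : S.G.E) : X.al (S.G.rev ed) = -X.al ed := X.compat.2.2 ed

/-- Sign of the `prevP` edge. -/
def ap (i : ZMod S.n) : ℤ := if i = 0 then X.b (i-1) else X.a (i-1)

/-- Sign of the `prevQ` edge. -/
def bp (i : ZMod S.n) : ℤ := if i = 0 then X.a (i-1) else X.b (i-1)

lemma hapu (i : ZMod S.n) : X.ap i = 1 ∨ X.ap i = -1 := by
  unfold ap; split
  · exact X.hbu _
  · exact X.hau _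

lemma hbpu (i : ZMod S.n) : X.bp i = 1 ∨ X.bp i = -1 := by
  unfold bp; split
  · exact X.hau _
  · exact X.hbu _

lemma hap (i : ZMod S.n) : X.al (S.prevP i) = (-(X.ap i)) • S.gam (i-1) := by
  unfold ap Section7.prevP
  split
  · rw [X.alrev, X.hb, neg_smul]
  · rw [X.alrev, X.ha, neg_smul]

lemma hbp (i : ZMod S.n) : X.al (S.prevQ i) = (-(X.bp i)) • S.gam (i-1) := by
  unfold bp Section7.prevQ
  split
  · rw [X.alrev, X.ha, neg_smul]
  · rw [X.alrev, X.hb, neg_smul]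

lemma ap_ne {i : ZMod S.n} (hi : i ≠ 0) : X.ap i = X.a (i-1) := by
  unfold ap; rw [if_neg hi]

lemma bp_ne {i : ZMod S.n} (hi : i ≠ 0) : X.bp i = X.b (i-1) := by
  unfold bp; rw [if_neg hi]

lemma ap_zero : X.ap 0 = X.b (0-1) := by
  unfold ap; rw [if_pos rfl]

lemma bp_zero : X.bp 0 = X.a (0-1) := by
  unfold bp; rw [if_pos rfl]

end SData

/-- Arithmetic core of the vertical dichotomy, case B. -/
lemma vert_arith {A AP B BP Cc K KP c1 c2 : ℤ}
    (hA : A = 1 ∨ A = -1) (hAP : AP = 1 ∨ AP = -1)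
    (hBP : BP = 1 ∨ BP = -1)
    (e1 : BP = -(c1 * (Cc * K))) (e2 : A = c1 * (Cc * KP))
    (e3 : AP = c2 * (Cc * K)) (e4 : B = -(c2 * (Cc * KP))) :
    (K = 1 ∨ K = -1) ∧ (KP = 1 ∨ KP = -1) ∧
      BP = -(A * (KP * K)) ∧ B = -(AP * (K * KP)) := by
  have hK : K = 1 ∨ K = -1 := by
    refine unit_right (x := c1 * Cc) ?_
    rcases hBP with h | h <;> [right; left] <;> linear_combination e1 - h
  have hKP : KP = 1 ∨ KP = -1 := by
    refine unit_right (x := c1 * Cc) ?_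
    rcases hA with h | h <;> [left; right] <;> linear_combination -e2 + h
  refine ⟨hK, hKP, ?_, ?_⟩ <;> rcases hK with hK' | hK' <;> rcases hKP with hKP' | hKP' <;>
    subst hK' <;> subst hKP' <;> linarith [e1, e2, e3, e4]

variable {S : Section7} (X : SData S)

/-- The vertical transport dichotomy at index `i`. -/
lemma vert_dich (i : ZMod S.n) :
    (X.b i = X.a i ∧ X.bp i = X.ap i) ∨
    ((S.k i = 1 ∨ S.k i = -1) ∧ (S.kp i = 1 ∨ S.kp i = -1) ∧
      X.bp i = -(X.a i * (S.kp i * S.k i)) ∧ X.b i = -(X.ap i * (S.k i * S.kp i))) := by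
  have hsrcf : S.G.src (S.f i) = S.G.src (S.g i) := (S.g_src i).symm
  have hsrcp : S.G.src (S.prevP i) = S.G.src (S.g i) :=
    (S.src_prevP i).trans (S.g_src i).symm
  have hfng : S.f i ≠ S.g i := S.f_ne_g i
  have hpng : S.prevP i ≠ S.g i := (S.g_ne_prevP i).symm
  have hpnf : S.prevP i ≠ S.f i := (S.f_ne_prevP i).symm
  obtain ⟨c1, hc1⟩ := X.compat.2.1 (S.g i) (S.f i) hsrcf
  obtain ⟨c2, hc2⟩ := X.compat.2.1 (S.g i) (S.prevP i) hsrcp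
  have hsrcE1 : S.G.src (X.C.t (S.g i) (S.f i)) = S.G.src (S.h i) := by
    rw [X.C.src_t _ _ hsrcf, S.g_dst]
  have hsrcE2 : S.G.src (X.C.t (S.g i) (S.prevP i)) = S.G.src (S.h i) := by
    rw [X.C.src_t _ _ hsrcp, S.g_dst]
  have hE1cases : X.C.t (S.g i) (S.f i) = S.h i ∨ X.C.t (S.g i) (S.f i) = S.prevQ i := by
    rcases S.star_q i hsrcE1 with hh | hh | hh
    · exact Or.inl hh
    · exact absurd hh (conn_ne_rev X.C hsrcf hfng)
    · exact Or.inr hh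
  rcases hE1cases with hcase | hcase
  · -- case A
    left
    have hE2 : X.C.t (S.g i) (S.prevP i) = S.prevQ i := by
      rcases S.star_q i hsrcE2 with hh | hh | hh
      · exact absurd (conn_inj X.C hsrcp hsrcf (hh.trans hcase.symm)) hpnf
      · exact absurd hh (conn_ne_rev X.C hsrcp hpng)
      · exact hh
    rw [hcase, X.hb i, X.ha i, X.hc i] at hc1
    rw [hE2, X.hbp i, X.hap i, X.hc i] at hc2
    have d1 := det2_linc (S.gam i) c1 hc1
    rw [det2_smul_l, det2_self, det2_smul_l, det2_self, det2_smul_l, S.dag_r] at d1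
    have hMne : X.c i * (S.k i * S.Dt i) ≠ 0 :=
      mul_ne_zero (pmone_ne (X.hcu i)) (mul_ne_zero (S.k_ne i) (S.Dt_ne i))
    have hc10 : c1 = 0 := by
      rcases mul_eq_zero.mp (show c1 * (X.c i * (S.k i * S.Dt i)) = 0 by linarith) with hh | hh
      · exact hh
      · exact absurd hh hMne
    rw [hc10, zero_smul, add_zero] at hc1
    have d2 := congrArg (det2 (S.gam (i-1))) hc1
    rw [det2_smul_r, det2_smul_r, det2_gam_gam] at d2
    have hb1 : X.b i = X.a i := mul_right_cancel₀ (S.Dt_ne i) d2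
    have d3 := det2_linc_r (S.gam (i-1)) c2 hc2
    rw [det2_smul_r, det2_self, det2_smul_r, det2_self, det2_smul_r, S.dag_l] at d3
    have hMne2 : X.c i * (-(S.kp i) * S.Dt i) ≠ 0 :=
      mul_ne_zero (pmone_ne (X.hcu i))
        (mul_ne_zero (neg_ne_zero.mpr (S.kp_ne i)) (S.Dt_ne i))
    have hc20 : c2 = 0 := by
      rcases mul_eq_zero.mp
        (show c2 * (X.c i * (-(S.kp i) * S.Dt i)) = 0 by linarith) with hh | hh
      · exact hh
      · exact absurd hh hMne2
    rw [hc20, zero_smul, add_zero] at hc2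
    have d4 := congrArg (fun z => det2 z (S.gam i)) hc2
    simp only [det2_smul_l, det2_gam_gam] at d4
    have hb2 : -(X.bp i) = -(X.ap i) := mul_right_cancel₀ (S.Dt_ne i) d4
    exact ⟨hb1, neg_injective hb2⟩
  · -- case B
    right
    have hE2 : X.C.t (S.g i) (S.prevP i) = S.h i := by
      rcases S.star_q i hsrcE2 with hh | hh | hh
      · exact hh
      · exact absurd hh (conn_ne_rev X.C hsrcp hpng)
      · exact absurd (conn_inj X.C hsrcp hsrcf (hh.trans hcase.symm)) hpnf
    rw [hcase, X.hbp i, X.ha i, X.hc i] at hc1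
    rw [hE2, X.hb i, X.hap i, X.hc i] at hc2
    -- hc1 : (-(bp i)) • γ(i-1) = a i • γ i + c1 • (c i • aG (g i))
    have d1 := det2_linc (S.gam i) c1 hc1
    rw [det2_smul_l, det2_gam_gam, det2_smul_l, det2_self, det2_smul_l, S.dag_r] at d1
    -- d1 : -(bp i) * Dt i = a i * 0 + c1 * (c i * (k i * Dt i))
    have d2 := det2_linc_r (S.gam (i-1)) c1 hc1
    rw [det2_smul_r, det2_self, det2_smul_r, det2_gam_gam, det2_smul_r, S.dag_l] at d2
    -- d2 : -(bp i) * 0 = a i * Dt i + c1 * (c i * (-(kp i) * Dt i))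
    have e1 : X.bp i = -(c1 * (X.c i * S.k i)) := by
      have := mul_right_cancel₀ (S.Dt_ne i)
        (show (-(X.bp i)) * S.Dt i = (c1 * (X.c i * S.k i)) * S.Dt i by linarith)
      linarith
    have e2 : X.a i = c1 * (X.c i * S.kp i) := by
      have := mul_right_cancel₀ (S.Dt_ne i)
        (show (X.a i) * S.Dt i = (c1 * (X.c i * S.kp i)) * S.Dt i by linarith)
      linarith
    -- second transport: hc2 : b i • γ i = (-(ap i)) • γ(i-1) + c2 • (c i • aG g i)
    have d3 := det2_linc (S.gam i) c2 hc2
    rw [det2_smul_l, det2_self, det2_smul_l, det2_gam_gam, det2_smul_l, S.dag_r] at d3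
    have d4 := det2_linc_r (S.gam (i-1)) c2 hc2
    rw [det2_smul_r, det2_gam_gam, det2_smul_r, det2_self, det2_smul_r, S.dag_l] at d4
    have e3 : X.ap i = c2 * (X.c i * S.k i) := by
      have := mul_right_cancel₀ (S.Dt_ne i)
        (show (X.ap i) * S.Dt i = (c2 * (X.c i * S.k i)) * S.Dt i by linarith)
      linarith
    have e4 : X.b i = -(c2 * (X.c i * S.kp i)) := by
      have := mul_right_cancel₀ (S.Dt_ne i)
        (show (-(X.b i)) * S.Dt i = (c2 * (X.c i * S.kp i)) * S.Dt i by linarith)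
      linarith
    exact vert_arith (X.hau i) (X.hapu i) (X.hbpu i) e1 e2 e3 e4

end Section7

end Statement18Transport

section Statement18Hor

lemma unit_solve {x y K : ℤ} (hK : K = 1 ∨ K = -1) (h : x * K = y) : x = y * K := by
  rcases hK with h' | h' <;> subst h' <;> linarith

namespace Section7

variable {S : Section7}

lemma prevP_succ (i : ZMod S.n) (hi1 : i + 1 ≠ 0) :
    S.prevP (i+1) = S.G.rev (S.f i) := by
  unfold prevP
  rw [if_neg hi1, add_sub_cancel_right]

lemma prevQ_succ (i : ZMod S.n) (hi1 : i + 1 ≠ 0) :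
    S.prevQ (i+1) = S.G.rev (S.h i) := by
  unfold prevQ
  rw [if_neg hi1, add_sub_cancel_right]

lemma prevP_zero : S.prevP 0 = S.G.rev (S.h (-1)) := by
  unfold prevP
  rw [if_pos rfl, zero_sub]

lemma prevQ_zero : S.prevQ 0 = S.G.rev (S.f (-1)) := by
  unfold prevQ
  rw [if_pos rfl, zero_sub]

lemma det2_gam_succ' (i : ZMod S.n) :
    det2 (S.gam (i+1)) (S.gam i) = -S.Dt (i+1) := by
  rw [det2_anti, det2_gam_succ]

lemma dgam_neg1_0 : det2 (S.gam (-1)) (S.gam 0) = S.Dt 0 := by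
  show det2 (S.gam (-1)) (S.gam 0) = det2 (S.gam (0-1)) (S.gam 0)
  rw [zero_sub]

lemma dgam_0_neg1 : det2 (S.gam 0) (S.gam (-1)) = -S.Dt 0 := by
  rw [det2_anti, dgam_neg1_0]

lemma dgam_neg2_neg1 : det2 (S.gam (-1-1)) (S.gam (-1)) = S.Dt (-1) := rfl

lemma dag_prev0 : det2 (S.aG (S.g 0)) (S.gam (-1)) = S.kp 0 * S.Dt 0 := by
  have h2 := S.dag_prev 0
  rwa [zero_sub] at h2

namespace SData

variable (X : SData S)

lemma hcrev (i : ZMod S.n) :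
    X.al (S.G.rev (S.g i)) = (-(X.c i)) • S.aG (S.g i) := by
  rw [X.alrev, X.hc, neg_smul]

/-- Horizontal transport dichotomy along `f i`, `i + 1 ≠ 0`. -/
lemma horf_dich (i : ZMod S.n) (hi1 : i + 1 ≠ 0) :
    (X.c (i+1) = X.c i ∧ X.a (i+1) = X.ap i) ∨
    ((S.k i = 1 ∨ S.k i = -1) ∧ X.a (i+1) = -(X.c i * S.k i) ∧
      X.c (i+1) = -(X.ap i * S.k i)) := by
  have hsrcg : S.G.src (S.g i) = S.G.src (S.f i) := S.g_src i
  have hsrcp : S.G.src (S.prevP i) = S.G.src (S.f i) := S.src_prevP i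
  have hgnf : S.g i ≠ S.f i := (S.f_ne_g i).symm
  have hpnf : S.prevP i ≠ S.f i := (S.f_ne_prevP i).symm
  have hpng : S.prevP i ≠ S.g i := (S.g_ne_prevP i).symm
  obtain ⟨c1, hc1⟩ := X.compat.2.1 (S.f i) (S.g i) hsrcg
  obtain ⟨c2, hc2⟩ := X.compat.2.1 (S.f i) (S.prevP i) hsrcp
  have hsrcE1 : S.G.src (X.C.t (S.f i) (S.g i)) = S.G.src (S.f (i+1)) := by
    rw [X.C.src_t _ _ hsrcg, S.chain_f i hi1]
  have hsrcE2 : S.G.src (X.C.t (S.f i) (S.prevP i)) = S.G.src (S.f (i+1)) := by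
    rw [X.C.src_t _ _ hsrcp, S.chain_f i hi1]
  have hMne : S.k i * S.Dt i ≠ 0 := mul_ne_zero (S.k_ne i) (S.Dt_ne i)
  have hE1cases : X.C.t (S.f i) (S.g i) = S.g (i+1) ∨ X.C.t (S.f i) (S.g i) = S.f (i+1) := by
    rcases S.star_p (i+1) hsrcE1 with hh | hh | hh
    · exact Or.inr hh
    · exact Or.inl hh
    · rw [prevP_succ i hi1] at hh
      exact absurd hh (conn_ne_rev X.C hsrcg hgnf)
  rcases hE1cases with hcase | hcase
  · left
    have hE2 : X.C.t (S.f i) (S.prevP i) = S.f (i+1) := by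
      rcases S.star_p (i+1) hsrcE2 with hh | hh | hh
      · exact hh
      · exact absurd (conn_inj X.C hsrcp hsrcg (hh.trans hcase.symm)) hpng
      · rw [prevP_succ i hi1] at hh
        exact absurd hh (conn_ne_rev X.C hsrcp hpnf)
    rw [hcase, X.hc, X.hc, X.ha] at hc1
    rw [hE2, X.ha, X.hap, X.ha] at hc2
    have d1 := det2_linc (S.gam i) c1 hc1
    rw [det2_smul_l, S.dag_prev' i, det2_smul_l, S.dag_r, det2_smul_l, det2_self,
      S.kp_succ i hi1, S.Dt_succ i] at d1
    have d2 := det2_linc (S.gam i) c2 hc2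
    rw [det2_smul_l, det2_gam_succ', det2_smul_l, det2_gam_gam, det2_smul_l, det2_self,
      S.Dt_succ i] at d2
    constructor
    · exact mul_right_cancel₀ hMne (by linarith)
    · have := mul_right_cancel₀ (S.Dt_ne i)
        (show (-(X.a (i+1))) * S.Dt i = (-(X.ap i)) * S.Dt i by linarith)
      linarith
  · right
    have hE2 : X.C.t (S.f i) (S.prevP i) = S.g (i+1) := by
      rcases S.star_p (i+1) hsrcE2 with hh | hh | hh
      · exact absurd (conn_inj X.C hsrcp hsrcg (hh.trans hcase.symm)) hpng
      · exact hh
      · rw [prevP_succ i hi1] at hh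
        exact absurd hh (conn_ne_rev X.C hsrcp hpnf)
    rw [hcase, X.ha, X.hc, X.ha] at hc1
    rw [hE2, X.hc, X.hap, X.ha] at hc2
    have d1 := det2_linc (S.gam i) c1 hc1
    rw [det2_smul_l, det2_gam_succ', det2_smul_l, S.dag_r, det2_smul_l, det2_self,
      S.Dt_succ i] at d1
    have d2 := det2_linc (S.gam i) c2 hc2
    rw [det2_smul_l, S.dag_prev' i, det2_smul_l, det2_gam_gam, det2_smul_l, det2_self,
      S.kp_succ i hi1, S.Dt_succ i] at d2
    have e1 : X.a (i+1) = -(X.c i * S.k i) := by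
      have := mul_right_cancel₀ (S.Dt_ne i)
        (show (X.a (i+1)) * S.Dt i = (-(X.c i * S.k i)) * S.Dt i by linarith)
      linarith
    have hK : S.k i = 1 ∨ S.k i = -1 := by
      refine unit_right (x := -(X.c i)) ?_
      rcases X.hau (i+1) with h | h <;> [left; right] <;> linear_combination -e1 + h
    have e2 : X.c (i+1) = -(X.ap i * S.k i) := by
      have h3 : X.c (i+1) * S.k i = -(X.ap i) := by
        have := mul_right_cancel₀ (S.Dt_ne i)
          (show (X.c (i+1) * S.k i) * S.Dt i = (-(X.ap i)) * S.Dt i by linarith)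
        linarith
      have := unit_solve hK h3
      linarith [this]
    exact ⟨hK, e1, e2⟩

/-- Horizontal transport dichotomy along `h i`, `i + 1 ≠ 0`. -/
lemma horh_dich (i : ZMod S.n) (hi1 : i + 1 ≠ 0) :
    (X.c (i+1) = X.c i ∧ X.b (i+1) = X.bp i) ∨
    ((S.k i = 1 ∨ S.k i = -1) ∧ X.b (i+1) = X.c i * S.k i ∧
      X.c (i+1) = X.bp i * S.k i) := by
  have hsrcg : S.G.src (S.G.rev (S.g i)) = S.G.src (S.h i) := by
    rw [S.G.src_rev, S.g_dst]
  have hsrcp : S.G.src (S.prevQ i) = S.G.src (S.h i) := S.src_prevQ i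
  have hgnf : S.G.rev (S.g i) ≠ S.h i := (S.h_ne_revg i).symm
  have hpnf : S.prevQ i ≠ S.h i := (S.h_ne_prevQ i).symm
  have hpng : S.prevQ i ≠ S.G.rev (S.g i) := (S.revg_ne_prevQ i).symm
  obtain ⟨c1, hc1⟩ := X.compat.2.1 (S.h i) (S.G.rev (S.g i)) hsrcg
  obtain ⟨c2, hc2⟩ := X.compat.2.1 (S.h i) (S.prevQ i) hsrcp
  have hsrcE1 : S.G.src (X.C.t (S.h i) (S.G.rev (S.g i))) = S.G.src (S.h (i+1)) := by
    rw [X.C.src_t _ _ hsrcg, S.chain_h i hi1]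
  have hsrcE2 : S.G.src (X.C.t (S.h i) (S.prevQ i)) = S.G.src (S.h (i+1)) := by
    rw [X.C.src_t _ _ hsrcp, S.chain_h i hi1]
  have hMne : S.k i * S.Dt i ≠ 0 := mul_ne_zero (S.k_ne i) (S.Dt_ne i)
  have hE1cases : X.C.t (S.h i) (S.G.rev (S.g i)) = S.G.rev (S.g (i+1)) ∨
      X.C.t (S.h i) (S.G.rev (S.g i)) = S.h (i+1) := by
    rcases S.star_q (i+1) hsrcE1 with hh | hh | hh
    · exact Or.inr hh
    · exact Or.inl hh
    · rw [prevQ_succ i hi1] at hh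
      exact absurd hh (conn_ne_rev X.C hsrcg hgnf)
  rcases hE1cases with hcase | hcase
  · left
    have hE2 : X.C.t (S.h i) (S.prevQ i) = S.h (i+1) := by
      rcases S.star_q (i+1) hsrcE2 with hh | hh | hh
      · exact hh
      · exact absurd (conn_inj X.C hsrcp hsrcg (hh.trans hcase.symm)) hpng
      · rw [prevQ_succ i hi1] at hh
        exact absurd hh (conn_ne_rev X.C hsrcp hpnf)
    rw [hcase, X.hcrev, X.hcrev, X.hb] at hc1
    rw [hE2, X.hb, X.hbp, X.hb] at hc2
    have d1 := det2_linc (S.gam i) c1 hc1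
    rw [det2_smul_l, S.dag_prev' i, det2_smul_l, S.dag_r, det2_smul_l, det2_self,
      S.kp_succ i hi1, S.Dt_succ i] at d1
    have d2 := det2_linc (S.gam i) c2 hc2
    rw [det2_smul_l, det2_gam_succ', det2_smul_l, det2_gam_gam, det2_smul_l, det2_self,
      S.Dt_succ i] at d2
    constructor
    · have := mul_right_cancel₀ hMne
        (show (-(X.c (i+1))) * (S.k i * S.Dt i) = (-(X.c i)) * (S.k i * S.Dt i) by linarith)
      linarith
    · have := mul_right_cancel₀ (S.Dt_ne i)
        (show (-(X.b (i+1))) * S.Dt i = (-(X.bp i)) * S.Dt i by linarith)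
      linarith
  · right
    have hE2 : X.C.t (S.h i) (S.prevQ i) = S.G.rev (S.g (i+1)) := by
      rcases S.star_q (i+1) hsrcE2 with hh | hh | hh
      · exact absurd (conn_inj X.C hsrcp hsrcg (hh.trans hcase.symm)) hpng
      · exact hh
      · rw [prevQ_succ i hi1] at hh
        exact absurd hh (conn_ne_rev X.C hsrcp hpnf)
    rw [hcase, X.hb, X.hcrev, X.hb] at hc1
    rw [hE2, X.hcrev, X.hbp, X.hb] at hc2
    have d1 := det2_linc (S.gam i) c1 hc1
    rw [det2_smul_l, det2_gam_succ', det2_smul_l, S.dag_r, det2_smul_l, det2_self,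
      S.Dt_succ i] at d1
    have d2 := det2_linc (S.gam i) c2 hc2
    rw [det2_smul_l, S.dag_prev' i, det2_smul_l, det2_gam_gam, det2_smul_l, det2_self,
      S.kp_succ i hi1, S.Dt_succ i] at d2
    have e1 : X.b (i+1) = X.c i * S.k i := by
      have := mul_right_cancel₀ (S.Dt_ne i)
        (show (-(X.b (i+1))) * S.Dt i = (-(X.c i * S.k i)) * S.Dt i by linarith)
      linarith
    have hK : S.k i = 1 ∨ S.k i = -1 := by
      refine unit_right (x := X.c i) ?_
      rcases X.hbu (i+1) with h | h <;> [left; right] <;> linear_combination -e1 + h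
    have e2 : X.c (i+1) = X.bp i * S.k i := by
      have h3 : X.c (i+1) * S.k i = X.bp i := by
        have := mul_right_cancel₀ (S.Dt_ne i)
          (show (X.c (i+1) * S.k i) * S.Dt i = (X.bp i) * S.Dt i by linarith)
        linarith
      exact unit_solve hK h3
    exact ⟨hK, e1, e2⟩

/-- Twisted transport dichotomy along `f (-1)`. -/
lemma twf_dich :
    (X.c 0 = X.c (-1) ∧ X.b 0 = X.ap (-1)) ∨
    ((S.k (-1) = 1 ∨ S.k (-1) = -1) ∧ X.b 0 = -(X.c (-1) * S.k (-1)) ∧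
      X.c 0 = -(X.ap (-1) * S.k (-1))) := by
  have hsrcg : S.G.src (S.g (-1)) = S.G.src (S.f (-1)) := S.g_src _
  have hsrcp : S.G.src (S.prevP (-1)) = S.G.src (S.f (-1)) := S.src_prevP _
  have hgnf : S.g (-1) ≠ S.f (-1) := (S.f_ne_g _).symm
  have hpnf : S.prevP (-1) ≠ S.f (-1) := (S.f_ne_prevP _).symm
  have hpng : S.prevP (-1) ≠ S.g (-1) := (S.g_ne_prevP _).symm
  obtain ⟨c1, hc1⟩ := X.compat.2.1 (S.f (-1)) (S.g (-1)) hsrcg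
  obtain ⟨c2, hc2⟩ := X.compat.2.1 (S.f (-1)) (S.prevP (-1)) hsrcp
  have hsrcE1 : S.G.src (X.C.t (S.f (-1)) (S.g (-1))) = S.G.src (S.h 0) := by
    rw [X.C.src_t _ _ hsrcg, S.twist_f]
  have hsrcE2 : S.G.src (X.C.t (S.f (-1)) (S.prevP (-1))) = S.G.src (S.h 0) := by
    rw [X.C.src_t _ _ hsrcp, S.twist_f]
  have hkne : S.k (-1) ≠ 0 := S.k_ne _
  have hDt1 : S.Dt (-1) = S.Dt 0 := S.Dt_all _
  have hE1cases : X.C.t (S.f (-1)) (S.g (-1)) = S.G.rev (S.g 0) ∨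
      X.C.t (S.f (-1)) (S.g (-1)) = S.h 0 := by
    rcases S.star_q 0 hsrcE1 with hh | hh | hh
    · exact Or.inr hh
    · exact Or.inl hh
    · rw [prevQ_zero] at hh
      exact absurd hh (conn_ne_rev X.C hsrcg hgnf)
  rcases hE1cases with hcase | hcase
  · left
    have hE2 : X.C.t (S.f (-1)) (S.prevP (-1)) = S.h 0 := by
      rcases S.star_q 0 hsrcE2 with hh | hh | hh
      · exact hh
      · exact absurd (conn_inj X.C hsrcp hsrcg (hh.trans hcase.symm)) hpng
      · rw [prevQ_zero] at hh
        exact absurd hh (conn_ne_rev X.C hsrcp hpnf)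
    rw [hcase, X.hcrev, X.hc, X.ha] at hc1
    rw [hE2, X.hb, X.hap, X.ha] at hc2
    have d1 := det2_linc (S.gam (-1)) c1 hc1
    rw [det2_smul_l, dag_prev0, det2_smul_l, S.dag_r, det2_smul_l, det2_self,
      S.kp_zero, hDt1] at d1
    have d2 := det2_linc (S.gam (-1)) c2 hc2
    rw [det2_smul_l, dgam_0_neg1, det2_smul_l, dgam_neg2_neg1, det2_smul_l, det2_self,
      hDt1] at d2
    constructor
    · have := mul_right_cancel₀ (mul_ne_zero hkne (S.Dt_ne 0))
        (show (X.c 0) * (S.k (-1) * S.Dt 0) = (X.c (-1)) * (S.k (-1) * S.Dt 0) by linarith)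
      linarith
    · have := mul_right_cancel₀ (S.Dt_ne 0)
        (show (-(X.b 0)) * S.Dt 0 = (-(X.ap (-1))) * S.Dt 0 by linarith)
      linarith
  · right
    have hE2 : X.C.t (S.f (-1)) (S.prevP (-1)) = S.G.rev (S.g 0) := by
      rcases S.star_q 0 hsrcE2 with hh | hh | hh
      · exact absurd (conn_inj X.C hsrcp hsrcg (hh.trans hcase.symm)) hpng
      · exact hh
      · rw [prevQ_zero] at hh
        exact absurd hh (conn_ne_rev X.C hsrcp hpnf)
    rw [hcase, X.hb, X.hc, X.ha] at hc1
    rw [hE2, X.hcrev, X.hap, X.ha] at hc2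
    have d1 := det2_linc (S.gam (-1)) c1 hc1
    rw [det2_smul_l, dgam_0_neg1, det2_smul_l, S.dag_r, det2_smul_l, det2_self,
      hDt1] at d1
    have d2 := det2_linc (S.gam (-1)) c2 hc2
    rw [det2_smul_l, dag_prev0, det2_smul_l, dgam_neg2_neg1, det2_smul_l, det2_self,
      S.kp_zero, hDt1] at d2
    have e1 : X.b 0 = -(X.c (-1) * S.k (-1)) := by
      have := mul_right_cancel₀ (S.Dt_ne 0)
        (show (-(X.b 0)) * S.Dt 0 = (X.c (-1) * S.k (-1)) * S.Dt 0 by linarith)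
      linarith
    have hK : S.k (-1) = 1 ∨ S.k (-1) = -1 := by
      refine unit_right (x := -(X.c (-1))) ?_
      rcases X.hbu 0 with h | h <;> [left; right] <;> linear_combination -e1 + h
    have e2 : X.c 0 = -(X.ap (-1) * S.k (-1)) := by
      have h3 : X.c 0 * S.k (-1) = -(X.ap (-1)) := by
        have := mul_right_cancel₀ (S.Dt_ne 0)
          (show (X.c 0 * S.k (-1)) * S.Dt 0 = (-(X.ap (-1))) * S.Dt 0 by linarith)
        linarith
      have := unit_solve hK h3
      linarith [this]
    exact ⟨hK, e1, e2⟩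

/-- Twisted transport dichotomy along `h (-1)`. -/
lemma twh_dich :
    (X.c 0 = X.c (-1) ∧ X.a 0 = X.bp (-1)) ∨
    ((S.k (-1) = 1 ∨ S.k (-1) = -1) ∧ X.a 0 = X.c (-1) * S.k (-1) ∧
      X.c 0 = X.bp (-1) * S.k (-1)) := by
  have hsrcg : S.G.src (S.G.rev (S.g (-1))) = S.G.src (S.h (-1)) := by
    rw [S.G.src_rev, S.g_dst]
  have hsrcp : S.G.src (S.prevQ (-1)) = S.G.src (S.h (-1)) := S.src_prevQ _
  have hgnf : S.G.rev (S.g (-1)) ≠ S.h (-1) := (S.h_ne_revg _).symm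
  have hpnf : S.prevQ (-1) ≠ S.h (-1) := (S.h_ne_prevQ _).symm
  have hpng : S.prevQ (-1) ≠ S.G.rev (S.g (-1)) := (S.revg_ne_prevQ _).symm
  obtain ⟨c1, hc1⟩ := X.compat.2.1 (S.h (-1)) (S.G.rev (S.g (-1))) hsrcg
  obtain ⟨c2, hc2⟩ := X.compat.2.1 (S.h (-1)) (S.prevQ (-1)) hsrcp
  have hsrcE1 : S.G.src (X.C.t (S.h (-1)) (S.G.rev (S.g (-1)))) = S.G.src (S.f 0) := by
    rw [X.C.src_t _ _ hsrcg, S.twist_h]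
  have hsrcE2 : S.G.src (X.C.t (S.h (-1)) (S.prevQ (-1))) = S.G.src (S.f 0) := by
    rw [X.C.src_t _ _ hsrcp, S.twist_h]
  have hkne : S.k (-1) ≠ 0 := S.k_ne _
  have hDt1 : S.Dt (-1) = S.Dt 0 := S.Dt_all _
  have hE1cases : X.C.t (S.h (-1)) (S.G.rev (S.g (-1))) = S.g 0 ∨
      X.C.t (S.h (-1)) (S.G.rev (S.g (-1))) = S.f 0 := by
    rcases S.star_p 0 hsrcE1 with hh | hh | hh
    · exact Or.inr hh
    · exact Or.inl hh
    · rw [prevP_zero] at hh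
      exact absurd hh (conn_ne_rev X.C hsrcg hgnf)
  rcases hE1cases with hcase | hcase
  · left
    have hE2 : X.C.t (S.h (-1)) (S.prevQ (-1)) = S.f 0 := by
      rcases S.star_p 0 hsrcE2 with hh | hh | hh
      · exact hh
      · exact absurd (conn_inj X.C hsrcp hsrcg (hh.trans hcase.symm)) hpng
      · rw [prevP_zero] at hh
        exact absurd hh (conn_ne_rev X.C hsrcp hpnf)
    rw [hcase, X.hc, X.hcrev, X.hb] at hc1
    rw [hE2, X.ha, X.hbp, X.hb] at hc2
    have d1 := det2_linc (S.gam (-1)) c1 hc1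
    rw [det2_smul_l, dag_prev0, det2_smul_l, S.dag_r, det2_smul_l, det2_self,
      S.kp_zero, hDt1] at d1
    have d2 := det2_linc (S.gam (-1)) c2 hc2
    rw [det2_smul_l, dgam_0_neg1, det2_smul_l, dgam_neg2_neg1, det2_smul_l, det2_self,
      hDt1] at d2
    constructor
    · have := mul_right_cancel₀ (mul_ne_zero hkne (S.Dt_ne 0))
        (show (X.c 0) * (S.k (-1) * S.Dt 0) = (X.c (-1)) * (S.k (-1) * S.Dt 0) by linarith)
      linarith
    · have := mul_right_cancel₀ (S.Dt_ne 0)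
        (show (-(X.a 0)) * S.Dt 0 = (-(X.bp (-1))) * S.Dt 0 by linarith)
      linarith
  · right
    have hE2 : X.C.t (S.h (-1)) (S.prevQ (-1)) = S.g 0 := by
      rcases S.star_p 0 hsrcE2 with hh | hh | hh
      · exact absurd (conn_inj X.C hsrcp hsrcg (hh.trans hcase.symm)) hpng
      · exact hh
      · rw [prevP_zero] at hh
        exact absurd hh (conn_ne_rev X.C hsrcp hpnf)
    rw [hcase, X.ha, X.hcrev, X.hb] at hc1
    rw [hE2, X.hc, X.hbp, X.hb] at hc2
    have d1 := det2_linc (S.gam (-1)) c1 hc1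
    rw [det2_smul_l, dgam_0_neg1, det2_smul_l, S.dag_r, det2_smul_l, det2_self,
      hDt1] at d1
    have d2 := det2_linc (S.gam (-1)) c2 hc2
    rw [det2_smul_l, dag_prev0, det2_smul_l, dgam_neg2_neg1, det2_smul_l, det2_self,
      S.kp_zero, hDt1] at d2
    have e1 : X.a 0 = X.c (-1) * S.k (-1) := by
      have := mul_right_cancel₀ (S.Dt_ne 0)
        (show (-(X.a 0)) * S.Dt 0 = (-(X.c (-1) * S.k (-1))) * S.Dt 0 by linarith)
      linarith
    have hK : S.k (-1) = 1 ∨ S.k (-1) = -1 := by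
      refine unit_right (x := X.c (-1)) ?_
      rcases X.hau 0 with h | h <;> [left; right] <;> linear_combination -e1 + h
    have e2 : X.c 0 = X.bp (-1) * S.k (-1) := by
      have h3 : X.c 0 * S.k (-1) = X.bp (-1) := by
        have := mul_right_cancel₀ (S.Dt_ne 0)
          (show (X.c 0 * S.k (-1)) * S.Dt 0 = (X.bp (-1)) * S.Dt 0 by linarith)
        linarith
      exact unit_solve hK h3
    exact ⟨hK, e1, e2⟩

end SData

end Section7

end Statement18Hor

section Statement18Classify

/-- The constraint system satisfied by the `c`-signs of a type III structure. -/
def KSys {n : ℕ} (k c : ZMod n → ℤ) (ε : ℤ) : Prop :=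
  (∀ i : ZMod n, i ≠ 0 → i + 1 ≠ 0 →
    (c (i+1) = c i ∧ k (i+1) = k (i-1)) ∨
    (c i = -(ε * (k i * k (i+1))) ∧ c (i+1) = -(ε * (k i * k (i-1))))) ∧
  ((c 1 = c 0 ∧ k 1 = -k (-1)) ∨
    (c 0 = -(ε * (k 0 * k 1)) ∧ c 1 = ε * (k (-1) * k 0))) ∧
  ((c 0 = c (-1) ∧ k 0 = -k (-2)) ∨
    (c (-1) = ε * (k 0 * k (-1)) ∧ c 0 = -(ε * (k (-2) * k (-1)))))

lemma KSys.neg {n : ℕ} {k c : ZMod n → ℤ} {ε : ℤ} (H : KSys k c ε) :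
    KSys k (fun i => -c i) (-ε) := by
  obtain ⟨H1, H2, H3⟩ := H
  refine ⟨?_, ?_, ?_⟩
  · intro i hi0 hi1
    rcases H1 i hi0 hi1 with ⟨hA, hB⟩ | ⟨hA, hB⟩
    · exact Or.inl ⟨by dsimp only; rw [hA], hB⟩
    · exact Or.inr ⟨by dsimp only; linear_combination -hA, by dsimp only; linear_combination -hB⟩
  · rcases H2 with ⟨hA, hB⟩ | ⟨hA, hB⟩
    · exact Or.inl ⟨by dsimp only; rw [hA], hB⟩
    · exact Or.inr ⟨by dsimp only; linear_combination -hA, by dsimp only; linear_combination -hB⟩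
  · rcases H3 with ⟨hA, hB⟩ | ⟨hA, hB⟩
    · exact Or.inl ⟨by dsimp only; rw [hA], hB⟩
    · exact Or.inr ⟨by dsimp only; linear_combination -hA, by dsimp only; linear_combination -hB⟩


lemma pmone_sq {x : ℤ} (h : x = 1 ∨ x = -1) : x * x = 1 := by
  rcases h with h | h <;> subst h <;> decide

lemma pmone_mul {x y : ℤ} (hx : x = 1 ∨ x = -1) (hy : y = 1 ∨ y = -1) :
    x * y = 1 ∨ x * y = -1 := by
  rcases hx with h | h <;> rcases hy with h' | h' <;> subst h <;> subst h' <;> simp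

lemma pmone_eq_of_mul_one {x y : ℤ} (hx : x = 1 ∨ x = -1) (hy : y = 1 ∨ y = -1)
    (hxy : x * y = 1) : y = x := by
  rcases hx with h | h <;> rcases hy with h' | h' <;> subst h <;> subst h' <;> omega

lemma pmone_opp {x y : ℤ} (hx : x = 1 ∨ x = -1) (hy : y = 1 ∨ y = -1)
    (hxy : y ≠ x) : y = -x := by
  rcases hx with h | h <;> rcases hy with h' | h' <;> subst h <;> subst h' <;> omega

namespace Section7

variable {S : Section7}

lemma neg_one_ne_zero' (S : Section7) : (-1 : ZMod S.n) ≠ 0 := by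
  haveI : Fact (1 < S.n) := ⟨by have := S.hn; omega⟩
  intro hh
  have h1 : (1 : ZMod S.n) = 0 := by linear_combination -hh
  exact one_ne_zero h1

lemma one_ne_zero' (S : Section7) : (1 : ZMod S.n) ≠ 0 := by
  haveI : Fact (1 < S.n) := ⟨by have := S.hn; omega⟩
  exact one_ne_zero

namespace SData

variable (X : SData S)

/-- `a i * b i` is constant. -/
lemma d_const : ∀ i, X.a i * X.b i = X.a 0 * X.b 0 := by
  have hstep : ∀ i, X.a i * X.b i = X.a (i-1) * X.b (i-1) := by
    intro i
    have happ : X.ap i * X.bp i = X.a (i-1) * X.b (i-1) := by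
      unfold ap bp; split <;> ring
    rcases vert_dich X i with ⟨h1, h2⟩ | ⟨-, -, h1, h2⟩
    · rw [h1, ← happ, h2, pmone_sq (X.hau i), pmone_sq (X.hapu i)]
    · rw [← happ, h1, h2]
      ring
  have H : ∀ m : ℕ, X.a ((m : ZMod S.n)) * X.b ((m : ZMod S.n)) = X.a 0 * X.b 0 := by
    intro m
    induction m with
    | zero => simp
    | succ m2 ih =>
        have h2 := hstep ((m2+1 : ℕ) : ZMod S.n)
        have h3 : ((m2+1 : ℕ) : ZMod S.n) - 1 = ((m2 : ℕ) : ZMod S.n) := by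
          push_cast; ring
        rw [h3] at h2
        rw [h2, ih]
  exact zmod_all _ (fun m _ => H m)

section Aligned

variable (hal : ∀ i, X.b i = X.a i)

include hal

lemma hapA (i : ZMod S.n) : X.ap i = X.a (i-1) := by
  unfold ap; split
  · rw [hal]
  · rfl

lemma hbpA (i : ZMod S.n) : X.bp i = X.a (i-1) := by
  unfold bp; split
  · rfl
  · rw [hal]

lemma align_step (i : ZMod S.n) (hi1 : i + 1 ≠ 0) :
    X.c (i+1) = X.c i ∧ X.a (i+1) = X.a (i-1) := by
  rcases X.horf_dich i hi1 with ⟨h1, h2⟩ | ⟨hk, e1, e2⟩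
  · exact ⟨h1, by rw [h2, X.hapA hal]⟩
  · rcases X.horh_dich i hi1 with ⟨h1, h2⟩ | ⟨hk', e1', e2'⟩
    · refine ⟨h1, ?_⟩
      have h5 := X.hbpA hal i
      rw [← hal (i+1), h2]
      exact h5
    · exfalso
      have h4 : X.a (i+1) = -X.b (i+1) := by rw [e1', e1]
      rw [hal (i+1)] at h4
      have := pmone_ne (X.hau (i+1))
      omega

lemma align_tw : X.c 0 = X.c (-1) ∧ X.a 0 = X.a (-1-1) := by
  rcases X.twf_dich with ⟨h1, h2⟩ | ⟨hk, e1, e2⟩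
  · refine ⟨h1, ?_⟩
    rw [← hal 0, h2, X.ap_ne S.neg_one_ne_zero']
  · rcases X.twh_dich with ⟨h1, h2⟩ | ⟨hk', e1', e2'⟩
    · refine ⟨h1, ?_⟩
      rw [h2, X.bp_ne S.neg_one_ne_zero', hal]
    · exfalso
      have h4 : X.a 0 = -X.b 0 := by rw [e1', e1]; ring
      rw [hal 0] at h4
      have := pmone_ne (X.hau 0)
      omega

lemma align_c_const : ∀ i, X.c i = X.c 0 := by
  have H : ∀ m : ℕ, m < S.n → X.c ((m : ZMod S.n)) = X.c 0 := by
    intro m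
    induction m with
    | zero => intro _; simp
    | succ m2 ih =>
        intro hlt
        have h2 := (X.align_step hal (m2 : ZMod S.n) (zmod_cast_succ_ne hlt)).1
        have h3 : ((m2+1 : ℕ) : ZMod S.n) = (m2 : ZMod S.n) + 1 := by push_cast; ring
        rw [h3, h2]
        exact ih (by omega)
  exact zmod_all _ H

lemma align_a_per : ∀ j : ZMod S.n, X.a (j + 2) = X.a j := by
  intro j
  by_cases hj : j + 2 = 0
  · have hj' : j = -2 := eq_neg_of_add_eq_zero_left hj
    subst hj'
    have h2 := (X.align_tw hal).2
    rw [show (-2 : ZMod S.n) + 2 = 0 by ring, h2]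
    norm_num
  · have h2 := (X.align_step hal (j+1) (by rwa [add_assoc, show (1:ZMod S.n)+1 = 2 from one_add_one_eq_two])).2
    rwa [add_assoc, show (1:ZMod S.n)+1 = 2 from one_add_one_eq_two, add_sub_cancel_right] at h2

lemma align_a_odd (hodd : Odd S.n) : ∀ i, X.a i = X.a 0 := by
  have h2t : ∀ (t : ℕ) (j : ZMod S.n), X.a (j + (2*t : ℕ)) = X.a j := by
    intro t
    induction t with
    | zero => intro j; simp
    | succ t2 ih =>
        intro j
        have hcast : ((2*(t2+1) : ℕ) : ZMod S.n) = ((2*t2 : ℕ) : ZMod S.n) + 2 := by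
          push_cast; ring
        rw [hcast, ← add_assoc, X.align_a_per hal, ih]
  have hsucc : ∀ j : ZMod S.n, X.a (j + 1) = X.a j := by
    intro j
    have ht := h2t ((S.n+1)/2) j
    have h4 : 2 * ((S.n+1)/2) = S.n + 1 := by
      obtain ⟨l, hl⟩ := hodd
      omega
    rw [h4] at ht
    have h5 : ((S.n+1 : ℕ) : ZMod S.n) = 1 := by
      push_cast [ZMod.natCast_self]
      ring
    rwa [h5] at ht
  have H : ∀ m : ℕ, X.a ((m : ZMod S.n)) = X.a 0 := by
    intro m
    induction m with
    | zero => simp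
    | succ m2 ih =>
        have h3 : ((m2+1 : ℕ) : ZMod S.n) = (m2 : ZMod S.n) + 1 := by push_cast; ring
        rw [h3, hsucc, ih]
  exact zmod_all _ (fun m _ => H m)

lemma align_a_parity : ∀ m : ℕ, X.a ((m : ZMod S.n)) = if Even m then X.a 0 else X.a 1 := by
  intro m
  induction m using Nat.strong_induction_on with
  | _ m ih =>
      match m with
      | 0 => simp
      | 1 => simp
      | (m2+2) =>
          have h3 : ((m2+2 : ℕ) : ZMod S.n) = (m2 : ZMod S.n) + 2 := by push_cast; ring
          rw [h3, X.align_a_per hal, ih m2 (by omega)]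
          congr 1
          simp [Nat.even_add]

end Aligned

section Anti

variable (hanti : ∀ i, X.b i = -X.a i)

include hanti

lemma anti_kunit (i : ZMod S.n) : S.k i = 1 ∨ S.k i = -1 := by
  rcases vert_dich X i with ⟨h1, -⟩ | ⟨hk, -, -, -⟩
  · exfalso
    rw [hanti i] at h1
    have := pmone_ne (X.hau i)
    omega
  · exact hk

lemma anti_a_step (i : ZMod S.n) : X.a i = X.a (i-1) * (S.k i * S.k (i-1)) := by
  rcases vert_dich X i with ⟨h1, -⟩ | ⟨hk, hkp, -, h2⟩
  · exfalso
    rw [hanti i] at h1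
    have := pmone_ne (X.hau i)
    omega
  · rw [hanti i] at h2
    have h3 : X.a i = X.ap i * (S.k i * S.kp i) := by linarith
    unfold ap Section7.kp at h3
    split at h3
    · rw [hanti] at h3
      linear_combination h3
    · exact h3

lemma anti_u_const : ∀ i, X.a i * S.k i = X.a 0 * S.k 0 := by
  have H : ∀ m : ℕ, X.a ((m : ZMod S.n)) * S.k ((m : ZMod S.n)) = X.a 0 * S.k 0 := by
    intro m
    induction m with
    | zero => simp
    | succ m2 ih =>
        have hstep := X.anti_a_step hanti ((m2+1 : ℕ) : ZMod S.n)
        have h3 : ((m2+1 : ℕ) : ZMod S.n) - 1 = ((m2 : ℕ) : ZMod S.n) := by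
          push_cast; ring
        rw [h3] at hstep
        have hsq := pmone_sq (X.anti_kunit hanti ((m2+1 : ℕ) : ZMod S.n))
        linear_combination (S.k ((m2+1 : ℕ) : ZMod S.n)) * hstep +
          (X.a ((m2 : ℕ) : ZMod S.n) * S.k ((m2 : ℕ) : ZMod S.n)) * hsq + ih
  exact zmod_all _ (fun m _ => H m)

lemma anti_a_form (i : ZMod S.n) : X.a i = (X.a 0 * S.k 0) * S.k i := by
  have hu := X.anti_u_const hanti i
  have hsq := pmone_sq (X.anti_kunit hanti i)
  linear_combination (S.k i) * hu - (X.a i) * hsq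

lemma anti_eps_unit : X.a 0 * S.k 0 = 1 ∨ X.a 0 * S.k 0 = -1 :=
  pmone_mul (X.hau 0) (X.anti_kunit hanti 0)

lemma anti_sys : KSys S.k X.c (X.a 0 * S.k 0) := by
  set ε := X.a 0 * S.k 0 with hεdef
  have hform := X.anti_a_form hanti
  have hku := X.anti_kunit hanti
  have hεne : ε ≠ 0 := pmone_ne (X.anti_eps_unit hanti)
  refine ⟨?_, ?_, ?_⟩
  · intro i hi0 hi1
    rcases X.horf_dich i hi1 with ⟨h1, h2⟩ | ⟨hk, e1, e2⟩
    · left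
      refine ⟨h1, ?_⟩
      rw [X.ap_ne hi0] at h2
      have hf1 := hform (i+1)
      have hf2 := hform (i-1)
      refine mul_left_cancel₀ hεne ?_
      rw [← hf1, ← hf2, h2]
    · right
      have hsq := pmone_sq (hku i)
      have hf1 := hform (i+1)
      rw [X.ap_ne hi0] at e2
      constructor
      · linear_combination (S.k i) * e1 - (X.c i) * hsq - (S.k i) * hf1
      · rw [hform (i-1)] at e2
        linear_combination e2
  · have h10 : (0 : ZMod S.n) + 1 ≠ 0 := by rw [zero_add]; exact S.one_ne_zero'
    have hz1 : (0 : ZMod S.n) + 1 = 1 := zero_add 1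
    rcases X.horf_dich 0 h10 with ⟨h1, h2⟩ | ⟨hk, e1, e2⟩
    · left
      rw [hz1] at h1 h2
      refine ⟨h1, ?_⟩
      rw [X.ap_zero, zero_sub, hanti] at h2
      have hf1 := hform 1
      have hf2 := hform (-1)
      refine mul_left_cancel₀ hεne ?_
      have hgoal : ε * S.k 1 = -(ε * S.k (-1)) := by linear_combination h2 - hf1 - hf2
      rw [hgoal]
      ring
    · right
      rw [hz1] at e1 e2
      rw [X.ap_zero, zero_sub, hanti] at e2
      have hsq := pmone_sq (hku 0)
      have hf1 := hform 1
      have hf2 := hform (-1)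
      constructor
      · linear_combination (S.k 0) * e1 - (X.c 0) * hsq - (S.k 0) * hf1
      · linear_combination e2 + (S.k 0) * hf2
  · have heq2 : (-1 : ZMod S.n) - 1 = -2 := by ring
    rcases X.twf_dich with ⟨h1, h2⟩ | ⟨hk, e1, e2⟩
    · left
      refine ⟨h1, ?_⟩
      rw [X.ap_ne S.neg_one_ne_zero', heq2, hanti 0] at h2
      have hf0 := hform 0
      have hf2 := hform (-2)
      refine mul_left_cancel₀ hεne ?_
      have hgoal : ε * S.k 0 = -(ε * S.k (-2)) := by linear_combination -h2 - hf0 - hf2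
      rw [hgoal]
      ring
    · right
      rw [hanti] at e1
      rw [X.ap_ne S.neg_one_ne_zero', heq2, hform (-2)] at e2
      have hsq := pmone_sq (hku (-1))
      have hf0 := hform 0
      constructor
      · linear_combination (S.k (-1)) * e1 - (X.c (-1)) * hsq + (S.k (-1)) * hf0
      · linear_combination e2

end Anti

end SData

end Section7

end Statement18Classify

section Statement18Kernel

variable {n : ℕ}

lemma kernel_same (hn3 : 3 ≤ n) (k c c' : ZMod n → ℤ) (ε : ℤ)
    (hku : ∀ i, k i = 1 ∨ k i = -1)
    (hcu : ∀ i, c i = 1 ∨ c i = -1) (hc'u : ∀ i, c' i = 1 ∨ c' i = -1)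
    (Hs : KSys k c ε) (Hs' : KSys k c' ε)
    (NOBAD : ¬ ((∀ i : ZMod n, i ≠ 0 → k i = -k (i-1)) ∧ k 0 = k (-1))) :
    ∀ i, c' i = c i := by
  haveI : NeZero n := ⟨by omega⟩
  obtain ⟨H1, H2, H3⟩ := Hs
  obtain ⟨H1', H2', H3'⟩ := Hs'
  -- the one-step propagation lemmas
  have step_eq : ∀ m : ℕ, m + 1 < n → c' ((m : ZMod n)) = c ((m : ZMod n)) →
      c' ((m : ZMod n) + 1) = c ((m : ZMod n) + 1) := by
    intro m hm1 hmeq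
    by_cases hm0 : m = 0
    · subst hm0
      rw [Nat.cast_zero] at hmeq ⊢
      rw [zero_add]
      rcases H2 with ⟨hA, hB⟩ | ⟨hA, hB⟩ <;> rcases H2' with ⟨hA', hB'⟩ | ⟨hA', hB'⟩
      · rw [hA, hA', hmeq]
      · have t1 : c' 1 = c' 0 := by linear_combination hB' - hA' + (ε * k 0) * hB
        rw [hA, t1, hmeq]
      · have t1 : c 1 = c 0 := by linear_combination hB - hA + (ε * k 0) * hB'
        rw [t1, hA', hmeq]
      · rw [hB, hB']
    · have hi0 : ((m : ZMod n)) ≠ 0 := zmod_cast_ne_zero (by omega) (by omega)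
      have hi1 : ((m : ZMod n)) + 1 ≠ 0 := zmod_cast_succ_ne hm1
      rcases H1 _ hi0 hi1 with ⟨hA, hB⟩ | ⟨hA, hB⟩ <;>
        rcases H1' _ hi0 hi1 with ⟨hA', hB'⟩ | ⟨hA', hB'⟩
      · rw [hA, hA', hmeq]
      · have t1 : c' ((m : ZMod n) + 1) = c' ((m : ZMod n)) := by
          linear_combination hB' - hA' + (ε * k ((m : ZMod n))) * hB
        rw [hA, t1, hmeq]
      · have t1 : c ((m : ZMod n) + 1) = c ((m : ZMod n)) := by
          linear_combination hB - hA + (ε * k ((m : ZMod n))) * hB'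
        rw [t1, hA', hmeq]
      · rw [hB, hB']
  have step_ne : ∀ m : ℕ, m + 1 < n → c' ((m : ZMod n)) = -c ((m : ZMod n)) →
      c' ((m : ZMod n) + 1) = -c ((m : ZMod n) + 1) := by
    intro m hm1 hmeq
    by_cases hm0 : m = 0
    · subst hm0
      rw [Nat.cast_zero] at hmeq ⊢
      rw [zero_add]
      rcases H2 with ⟨hA, hB⟩ | ⟨hA, hB⟩ <;> rcases H2' with ⟨hA', hB'⟩ | ⟨hA', hB'⟩
      · rw [hA, hA', hmeq]
      · have t1 : c' 1 = c' 0 := by linear_combination hB' - hA' + (ε * k 0) * hB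
        rw [hA, t1, hmeq]
      · have t1 : c 1 = c 0 := by linear_combination hB - hA + (ε * k 0) * hB'
        rw [t1, hA', hmeq]
      · exfalso
        have hceq : c' 0 = c 0 := by rw [hA, hA']
        have := pmone_ne (hcu 0)
        omega
    · have hi0 : ((m : ZMod n)) ≠ 0 := zmod_cast_ne_zero (by omega) (by omega)
      have hi1 : ((m : ZMod n)) + 1 ≠ 0 := zmod_cast_succ_ne hm1
      rcases H1 _ hi0 hi1 with ⟨hA, hB⟩ | ⟨hA, hB⟩ <;>
        rcases H1' _ hi0 hi1 with ⟨hA', hB'⟩ | ⟨hA', hB'⟩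
      · rw [hA, hA', hmeq]
      · have t1 : c' ((m : ZMod n) + 1) = c' ((m : ZMod n)) := by
          linear_combination hB' - hA' + (ε * k ((m : ZMod n))) * hB
        rw [hA, t1, hmeq]
      · have t1 : c ((m : ZMod n) + 1) = c ((m : ZMod n)) := by
          linear_combination hB - hA + (ε * k ((m : ZMod n))) * hB'
        rw [t1, hA', hmeq]
      · exfalso
        have hceq : c' ((m : ZMod n)) = c ((m : ZMod n)) := by rw [hA, hA']
        have := pmone_ne (hcu ((m : ZMod n)))
        omega
  by_cases hc0 : c' 0 = c 0
  · -- equal everywhere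
    have H : ∀ m : ℕ, m < n → c' ((m : ZMod n)) = c ((m : ZMod n)) := by
      intro m
      induction m with
      | zero => intro _; rw [Nat.cast_zero]; exact hc0
      | succ m2 ih =>
          intro hlt
          have h2 := step_eq m2 hlt (ih (by omega))
          have h3 : ((m2+1 : ℕ) : ZMod n) = (m2 : ZMod n) + 1 := by push_cast; ring
          rw [h3]
          exact h2
    exact zmod_all _ H
  · -- different everywhere; derive a contradiction
    exfalso
    have hc0' : c' 0 = -c 0 := pmone_opp (hcu 0) (hc'u 0) hc0
    have Hd : ∀ m : ℕ, m < n → c' ((m : ZMod n)) = -c ((m : ZMod n)) := by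
      intro m
      induction m with
      | zero => intro _; rw [Nat.cast_zero]; exact hc0'
      | succ m2 ih =>
          intro hlt
          have h2 := step_ne m2 hlt (ih (by omega))
          have h3 : ((m2+1 : ℕ) : ZMod n) = (m2 : ZMod n) + 1 := by push_cast; ring
          rw [h3]
          exact h2
    have hdiff : ∀ i : ZMod n, c' i = -c i := zmod_all _ Hd
    -- global K conditions
    have Kcond1 : ∀ i : ZMod n, i ≠ 0 → i + 1 ≠ 0 → k (i+1) = k (i-1) := by
      intro i hi0 hi1
      rcases H1 i hi0 hi1 with ⟨-, hB⟩ | ⟨hA, -⟩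
      · exact hB
      · rcases H1' i hi0 hi1 with ⟨-, hB'⟩ | ⟨hA', -⟩
        · exact hB'
        · exfalso
          have hceq : c' i = c i := by rw [hA, hA']
          have h5 := hdiff i
          have := pmone_ne (hcu i)
          omega
    have KcondT : k 0 = -k (-2) := by
      rcases H3 with ⟨-, hB⟩ | ⟨hA, -⟩
      · exact hB
      · rcases H3' with ⟨-, hB'⟩ | ⟨hA', -⟩
        · exact hB'
        · exfalso
          have hceq : c' (-1) = c (-1) := by rw [hA, hA']
          have h5 := hdiff (-1)
          have := pmone_ne (hcu (-1))
          omega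
    -- parity structure of k
    have Kpar : ∀ m : ℕ, m ≤ n - 1 →
        k ((m : ZMod n)) = if Even m then k 0 else k 1 := by
      intro m
      induction m using Nat.strong_induction_on with
      | _ m ih =>
          match m with
          | 0 => intro _; simp
          | 1 => intro _; simp
          | (m2+2) =>
              intro hle
              have hi0 : ((m2+1 : ℕ) : ZMod n) ≠ 0 := zmod_cast_ne_zero (by omega) (by omega)
              have hi1 : ((m2+1 : ℕ) : ZMod n) + 1 ≠ 0 := zmod_cast_succ_ne (by omega)
              have h2 := Kcond1 _ hi0 hi1
              have h3 : ((m2+1 : ℕ) : ZMod n) + 1 = ((m2+2 : ℕ) : ZMod n) := by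
                push_cast; ring
              have h4 : ((m2+1 : ℕ) : ZMod n) - 1 = ((m2 : ℕ) : ZMod n) := by
                push_cast; ring
              rw [h3, h4] at h2
              rw [h2, ih m2 (by omega) (by omega)]
              congr 1
              simp [Nat.even_add]
    have ncast2 : ((n - 2 : ℕ) : ZMod n) = -2 := by
      have h0 : ((n : ℕ) : ZMod n) = 0 := ZMod.natCast_self n
      rw [Nat.cast_sub (by omega : 2 ≤ n), h0, Nat.cast_ofNat]
      ring
    have ncast1 : ((n - 1 : ℕ) : ZMod n) = -1 := by
      have h0 : ((n : ℕ) : ZMod n) = 0 := ZMod.natCast_self n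
      rw [Nat.cast_sub (by omega : 1 ≤ n), h0, Nat.cast_one]
      ring
    by_cases heven : Even n
    · have h1 := Kpar (n-2) (by omega)
      have he2 : Even (n-2) := by
        obtain ⟨l, hl⟩ := heven
        exact ⟨l-1, by omega⟩
      rw [if_pos he2, ncast2] at h1
      rw [h1] at KcondT
      have := pmone_ne (hku 0)
      omega
    · -- n odd
      have hodd : Odd n := Nat.not_even_iff_odd.mp heven
      obtain ⟨l, hl⟩ := hodd
      have h1 := Kpar (n-1) (by omega)
      have he1 : Even (n-1) := ⟨l, by omega⟩
      rw [if_pos he1, ncast1] at h1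
      have h2 := Kpar (n-2) (by omega)
      have he2 : ¬ Even (n-2) := by
        intro ⟨l2, hl2⟩
        omega
      rw [if_neg he2, ncast2] at h2
      -- KcondT : k 0 = -k (-2) = -k 1
      rw [h2] at KcondT
      apply NOBAD
      constructor
      · intro i hi
        have hicast : i = ((i.val : ℕ) : ZMod n) := by
          rw [ZMod.natCast_val, ZMod.cast_id]
        have hval : 1 ≤ i.val := by
          rcases Nat.eq_zero_or_pos i.val with h | h
          · exfalso; apply hi
            rw [hicast, h, Nat.cast_zero]
          · omega
        have hvlt : i.val < n := ZMod.val_lt i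
        have hsub : i - 1 = (((i.val - 1 : ℕ)) : ZMod n) := by
          rw [Nat.cast_sub (by omega : 1 ≤ i.val)]
          rw [← hicast, Nat.cast_one]
        have hki := Kpar i.val (by omega)
        have hki1 := Kpar (i.val - 1) (by omega)
        rw [← hicast] at hki
        rw [hsub, hki1, hki]
        by_cases hpar : Even i.val
        · rw [if_pos hpar, if_neg (by
            intro ⟨l2, hl2⟩
            obtain ⟨l3, hl3⟩ := hpar
            omega)]
          linarith [KcondT]
        · rw [if_neg hpar, if_pos (by
            rcases Nat.even_or_odd i.val with h | h
            · exact absurd h hpar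
            · obtain ⟨l3, hl3⟩ := h
              exact ⟨l3, by omega⟩)]
          linarith [KcondT]
      · exact h1.symm

/-- The kernel uniqueness lemma. -/
lemma kernel (hn3 : 3 ≤ n) (k c c' : ZMod n → ℤ) (ε ε' : ℤ)
    (hku : ∀ i, k i = 1 ∨ k i = -1) (hεu : ε = 1 ∨ ε = -1) (hε'u : ε' = 1 ∨ ε' = -1)
    (hcu : ∀ i, c i = 1 ∨ c i = -1) (hc'u : ∀ i, c' i = 1 ∨ c' i = -1)
    (Hs : KSys k c ε) (Hs' : KSys k c' ε')
    (NOBAD : ¬ ((∀ i : ZMod n, i ≠ 0 → k i = -k (i-1)) ∧ k 0 = k (-1))) :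
    (ε' = ε ∧ ∀ i, c' i = c i) ∨ (ε' = -ε ∧ ∀ i, c' i = -c i) := by
  by_cases hee : ε' = ε
  · subst hee
    exact Or.inl ⟨rfl, kernel_same hn3 k c c' ε' hku hcu hc'u Hs Hs' NOBAD⟩
  · have hee' : ε' = -ε := pmone_opp hεu hε'u hee
    right
    refine ⟨hee', ?_⟩
    have Hneg : KSys k (fun i => -c' i) (-ε') := Hs'.neg
    have heq : -ε' = ε := by rw [hee']; ring
    rw [heq] at Hneg
    have hnegu : ∀ i, -c' i = 1 ∨ -c' i = -1 := by
      intro i; rcases hc'u i with h | h <;> [right; left] <;> rw [h] <;> ring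
    have := kernel_same hn3 k c (fun i => -c' i) ε hku hcu hnegu Hs Hneg NOBAD
    intro i
    have h2 := this i
    linarith

end Statement18Kernel

section Statement18Interior

/-- The linear functional `z ↦ cross u z` on `ℂ`. -/
noncomputable def crossL (u : ℂ) : ℂ →ₗ[ℝ] ℝ where
  toFun z := u.re * z.im - u.im * z.re
  map_add' x y := by simp [Complex.add_re, Complex.add_im]; ring
  map_smul' r z := by
    simp [Complex.real_smul, Complex.mul_re, Complex.mul_im, smul_eq_mul]
    ring

lemma toC_re (a : Zm 2) : (toC a).re = (a 0 : ℝ) := by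
  simp [toC]

lemma toC_im (a : Zm 2) : (toC a).im = (a 1 : ℝ) := by
  simp [toC]

lemma toC_neg (v : Zm 2) : toC (-v) = -toC v := by
  simp only [toC, Pi.neg_apply]
  push_cast
  ring

lemma crossL_toC (u v : Zm 2) : crossL (toC u) (toC v) = ((det2 u v : ℤ) : ℝ) := by
  simp only [crossL, LinearMap.coe_mk, AddHom.coe_mk, toC_re, toC_im, det2]
  push_cast
  ring

namespace Section7

variable {S : Section7}

lemma not_interior {w : S.G.V} (u x₀ : ℂ)
    (hpos : ∀ e, S.G.src e = w → 0 ≤ crossL u (toC (S.aG e)))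
    (hneg : crossL u x₀ < 0) : ¬ InteriorVtx S.G S.aG w := by
  intro hint
  obtain ⟨cf, hcf, hsum⟩ := hint x₀
  rw [hsum, map_sum] at hneg
  have hterm : ∀ e ∈ Finset.univ.filter (fun e => S.G.src e = w),
      0 ≤ crossL u (cf e • toC (S.aG e)) := by
    intro e he
    rw [map_smul, smul_eq_mul]
    exact mul_nonneg (hcf e) (hpos e (Finset.mem_filter.mp he).2)
  linarith [Finset.sum_nonneg hterm]

lemma nobad (S : Section7) (hku : ∀ i, S.k i = 1 ∨ S.k i = -1) :
    ¬ ((∀ i : ZMod S.n, i ≠ 0 → S.k i = -S.k (i-1)) ∧ S.k 0 = S.k (-1)) := by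
  rintro ⟨bad1, bad2⟩
  have hkp : ∀ i, S.kp i = -S.k i := by
    intro i
    unfold kp
    split
    · next hh => subst hh; rw [zero_sub, ← bad2]
    · next hh => rw [bad1 i hh]; ring
  have hnotint : ∀ w : S.G.V, ¬ InteriorVtx S.G S.aG w := by
    intro w
    obtain ⟨i, hw | hw⟩ := S.vertex_cases w
    · subst hw
      rcases hku i with hki | hki
      · -- k i = 1, functional along gam (i-1)
        apply not_interior (toC ((S.Dt i) • S.gam (i-1))) (toC ((-1 : ℤ) • S.gam i))
        · intro e he
          rcases S.star_p i he with hE | hE | hE <;> subst hE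
          · rw [S.aG_f, crossL_toC, det2_smul_l, det2_gam_gam, S.Dt_sq]
            norm_num
          · rw [crossL_toC, det2_smul_l]
            have hval : S.Dt i * det2 (S.gam (i-1)) (S.aG (S.g i)) = 1 := by
              rw [S.dag_l, hkp]
              rcases S.Dt_unit i with hD | hD <;> rw [hD, hki] <;> norm_num
            rw [hval]
            norm_num
          · rw [S.aG_prevP, toC_neg, map_neg, crossL_toC, det2_smul_l, det2_self]
            norm_num
        · rw [crossL_toC, det2_smul_l, det2_smul_r, det2_gam_gam]
          have hval : S.Dt i * (-1 * S.Dt i) = -1 := by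
            have := S.Dt_sq i; linarith
          rw [hval]
          norm_num
      · -- k i = -1, functional along gam i
        apply not_interior (toC ((S.Dt i) • S.gam i)) (toC (S.gam (i-1)))
        · intro e he
          rcases S.star_p i he with hE | hE | hE <;> subst hE
          · rw [S.aG_f, crossL_toC, det2_smul_l, det2_self]
            norm_num
          · rw [crossL_toC, det2_smul_l]
            have hval : S.Dt i * det2 (S.gam i) (S.aG (S.g i)) = 1 := by
              rw [det2_anti, S.dag_r]
              rcases S.Dt_unit i with hD | hD <;> rw [hD, hki] <;> norm_num
            rw [hval]
            norm_num
          · rw [S.aG_prevP, toC_neg, map_neg, crossL_toC, det2_smul_l]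
            have hval : S.Dt i * det2 (S.gam i) (S.gam (i-1)) = -1 := by
              rw [det2_anti, det2_gam_gam]
              have := S.Dt_sq i; linarith
            rw [hval]
            norm_num
        · rw [crossL_toC, det2_smul_l]
          have hval : S.Dt i * det2 (S.gam i) (S.gam (i-1)) = -1 := by
            rw [det2_anti, det2_gam_gam]
            have := S.Dt_sq i; linarith
          rw [hval]
          norm_num
    · subst hw
      rcases hku i with hki | hki
      · -- k i = 1, functional along gam i
        apply not_interior (toC ((S.Dt i) • S.gam i)) (toC (S.gam (i-1)))
        · intro e he
          rcases S.star_q i he with hE | hE | hE <;> subst hE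
          · rw [S.aG_h, crossL_toC, det2_smul_l, det2_self]
            norm_num
          · rw [S.aG_rev, toC_neg, map_neg, crossL_toC, det2_smul_l]
            have hval : S.Dt i * det2 (S.gam i) (S.aG (S.g i)) = -1 := by
              rw [det2_anti, S.dag_r]
              rcases S.Dt_unit i with hD | hD <;> rw [hD, hki] <;> norm_num
            rw [hval]
            norm_num
          · rw [S.aG_prevQ, toC_neg, map_neg, crossL_toC, det2_smul_l]
            have hval : S.Dt i * det2 (S.gam i) (S.gam (i-1)) = -1 := by
              rw [det2_anti, det2_gam_gam]
              have := S.Dt_sq i; linarith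
            rw [hval]
            norm_num
        · rw [crossL_toC, det2_smul_l]
          have hval : S.Dt i * det2 (S.gam i) (S.gam (i-1)) = -1 := by
            rw [det2_anti, det2_gam_gam]
            have := S.Dt_sq i; linarith
          rw [hval]
          norm_num
      · -- k i = -1, functional along gam (i-1)
        apply not_interior (toC ((S.Dt i) • S.gam (i-1))) (toC ((-1 : ℤ) • S.gam i))
        · intro e he
          rcases S.star_q i he with hE | hE | hE <;> subst hE
          · rw [S.aG_h, crossL_toC, det2_smul_l, det2_gam_gam, S.Dt_sq]
            norm_num
          · rw [S.aG_rev, toC_neg, map_neg, crossL_toC, det2_smul_l]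
            have hval : S.Dt i * det2 (S.gam (i-1)) (S.aG (S.g i)) = -1 := by
              rw [S.dag_l, hkp]
              rcases S.Dt_unit i with hD | hD <;> rw [hD, hki] <;> norm_num
            rw [hval]
            norm_num
          · rw [S.aG_prevQ, toC_neg, map_neg, crossL_toC, det2_smul_l, det2_self]
            norm_num
        · rw [crossL_toC, det2_smul_l, det2_smul_r, det2_gam_gam]
          have hval : S.Dt i * (-1 * S.Dt i) = -1 := by
            have := S.Dt_sq i; linarith
          rw [hval]
          norm_num
  have hempty : IsEmpty {p : S.G.V // InteriorVtx S.G S.aG p} :=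
    ⟨fun ⟨w, hw⟩ => hnotint w hw⟩
  have hcard := S.interior_count
  rw [Nat.card_of_isEmpty] at hcard
  have := S.hn
  omega

end Section7

end Statement18Interior

section Statement18Tau

namespace Section7

variable {S : Section7}

lemma rev_inj {x y : S.G.E} (h : S.G.rev x = S.G.rev y) : x = y := by
  rw [← S.G.rev_rev x, h, S.G.rev_rev]

lemma f_inj {i j : ZMod S.n} (h : S.f i = S.f j) : i = j :=
  S.p_inj (congrArg S.G.src h)

lemma h_inj {i j : ZMod S.n} (h : S.h i = S.h j) : i = j :=
  S.q_inj (congrArg S.G.src h)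

lemma g_inj {i j : ZMod S.n} (h : S.g i = S.g j) : i = j := by
  apply S.p_inj
  have := congrArg S.G.src h
  rwa [S.g_src, S.g_src] at this

lemma ne_f_h (i j : ZMod S.n) : S.f i ≠ S.h j :=
  fun hh => S.p_ne_q i j (congrArg S.G.src hh)

lemma ne_f_g (i j : ZMod S.n) : S.f i ≠ S.g j :=
  fun hh => S.f_horiz i (hh ▸ S.g_vert j)

lemma ne_h_g (i j : ZMod S.n) : S.h i ≠ S.g j :=
  fun hh => S.h_horiz i (hh ▸ S.g_vert j)

lemma ne_f_revg (i j : ZMod S.n) : S.f i ≠ S.G.rev (S.g j) :=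
  fun hh => S.f_horiz i (hh ▸ (S.π.vert_rev (S.g j)).mpr (S.g_vert j))

lemma ne_h_revg (i j : ZMod S.n) : S.h i ≠ S.G.rev (S.g j) :=
  fun hh => S.h_horiz i (hh ▸ (S.π.vert_rev (S.g j)).mpr (S.g_vert j))

lemma ne_g_revf (i j : ZMod S.n) : S.g i ≠ S.G.rev (S.f j) := by
  intro hh
  apply S.f_horiz j
  rw [← S.π.vert_rev (S.f j), ← hh]
  exact S.g_vert i

lemma ne_g_revh (i j : ZMod S.n) : S.g i ≠ S.G.rev (S.h j) := by
  intro hh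
  apply S.h_horiz j
  rw [← S.π.vert_rev (S.h j), ← hh]
  exact S.g_vert i

lemma ne_g_revg (i j : ZMod S.n) : S.g i ≠ S.G.rev (S.g j) := by
  intro hh
  apply S.p_ne_q i j
  have := congrArg S.G.src hh
  rwa [S.g_src, S.G.src_rev, S.g_dst] at this

lemma ne_f_revf (i j : ZMod S.n) : S.f i ≠ S.G.rev (S.f j) := by
  intro hh
  have hsrc := congrArg S.G.src hh
  rw [S.G.src_rev] at hsrc
  by_cases hj1 : j + 1 = 0
  · have hj' : j = -1 := eq_neg_of_add_eq_zero_left hj1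
    subst hj'
    rw [S.twist_f] at hsrc
    exact S.p_ne_q i 0 hsrc
  · rw [S.chain_f j hj1] at hsrc
    have hij : i = j + 1 := S.p_inj hsrc
    subst hij
    have hlab := congrArg S.aG hh
    rw [S.aG_f, S.aG_rev, S.aG_f] at hlab
    apply S.gam_ne_neg (j+1)
    rwa [add_sub_cancel_right]

lemma ne_h_revh (i j : ZMod S.n) : S.h i ≠ S.G.rev (S.h j) := by
  intro hh
  have hsrc := congrArg S.G.src hh
  rw [S.G.src_rev] at hsrc
  by_cases hj1 : j + 1 = 0
  · have hj' : j = -1 := eq_neg_of_add_eq_zero_left hj1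
    subst hj'
    rw [S.twist_h] at hsrc
    exact S.p_ne_q 0 i hsrc.symm
  · rw [S.chain_h j hj1] at hsrc
    have hij : i = j + 1 := S.q_inj hsrc
    subst hij
    have hlab := congrArg S.aG hh
    rw [S.aG_h, S.aG_rev, S.aG_h] at hlab
    apply S.gam_ne_neg (j+1)
    rwa [add_sub_cancel_right]

lemma ne_f_revh (i j : ZMod S.n) : S.f i ≠ S.G.rev (S.h j) := by
  intro hh
  have hsrc := congrArg S.G.src hh
  rw [S.G.src_rev] at hsrc
  by_cases hj1 : j + 1 = 0
  · have hj' : j = -1 := eq_neg_of_add_eq_zero_left hj1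
    subst hj'
    rw [S.twist_h] at hsrc
    have hi0 : i = 0 := S.p_inj hsrc
    subst hi0
    have hlab := congrArg S.aG hh
    rw [S.aG_f, S.aG_rev, S.aG_h] at hlab
    apply S.gam_ne_neg 0
    rwa [zero_sub]
  · rw [S.chain_h j hj1] at hsrc
    exact S.p_ne_q i (j+1) hsrc

lemma ne_h_revf (i j : ZMod S.n) : S.h i ≠ S.G.rev (S.f j) := by
  intro hh
  have hsrc := congrArg S.G.src hh
  rw [S.G.src_rev] at hsrc
  by_cases hj1 : j + 1 = 0
  · have hj' : j = -1 := eq_neg_of_add_eq_zero_left hj1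
    subst hj'
    rw [S.twist_f] at hsrc
    have hi0 : i = 0 := S.q_inj hsrc
    subst hi0
    have hlab := congrArg S.aG hh
    rw [S.aG_h, S.aG_rev, S.aG_f] at hlab
    apply S.gam_ne_neg 0
    rwa [zero_sub]
  · rw [S.chain_f j hj1] at hsrc
    exact (S.p_ne_q (j+1) i hsrc.symm)

/-- The fiberwise flip on edges. -/
noncomputable def tauE (S : Section7) (E : S.G.E) : S.G.E :=
  if h : ∃ j, E = S.f j then S.h h.choose
  else if h : ∃ j, E = S.h j then S.f h.choose
  else if h : ∃ j, E = S.G.rev (S.f j) then S.G.rev (S.h h.choose)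
  else if h : ∃ j, E = S.G.rev (S.h j) then S.G.rev (S.f h.choose)
  else if h : ∃ j, E = S.g j then S.G.rev (S.g h.choose)
  else if h : ∃ j, E = S.G.rev (S.g j) then S.g h.choose
  else E

lemma tauE_f (i : ZMod S.n) : tauE S (S.f i) = S.h i := by
  have hex : ∃ j, S.f i = S.f j := ⟨i, rfl⟩
  rw [tauE, dif_pos hex]
  exact congrArg S.h (S.f_inj hex.choose_spec).symm

lemma tauE_h (i : ZMod S.n) : tauE S (S.h i) = S.f i := by
  have hn1 : ¬ ∃ j, S.h i = S.f j := by rintro ⟨j, hj⟩; exact S.ne_f_h j i hj.symm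
  have hex : ∃ j, S.h i = S.h j := ⟨i, rfl⟩
  rw [tauE, dif_neg hn1, dif_pos hex]
  exact congrArg S.f (S.h_inj hex.choose_spec).symm

lemma tauE_revf (i : ZMod S.n) : tauE S (S.G.rev (S.f i)) = S.G.rev (S.h i) := by
  have hn1 : ¬ ∃ j, S.G.rev (S.f i) = S.f j := by
    rintro ⟨j, hj⟩; exact S.ne_f_revf j i hj.symm
  have hn2 : ¬ ∃ j, S.G.rev (S.f i) = S.h j := by
    rintro ⟨j, hj⟩; exact S.ne_h_revf j i hj.symm
  have hex : ∃ j, S.G.rev (S.f i) = S.G.rev (S.f j) := ⟨i, rfl⟩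
  rw [tauE, dif_neg hn1, dif_neg hn2, dif_pos hex]
  exact congrArg (fun j => S.G.rev (S.h j)) (S.f_inj (rev_inj hex.choose_spec)).symm

lemma tauE_revh (i : ZMod S.n) : tauE S (S.G.rev (S.h i)) = S.G.rev (S.f i) := by
  have hn1 : ¬ ∃ j, S.G.rev (S.h i) = S.f j := by
    rintro ⟨j, hj⟩; exact S.ne_f_revh j i hj.symm
  have hn2 : ¬ ∃ j, S.G.rev (S.h i) = S.h j := by
    rintro ⟨j, hj⟩; exact S.ne_h_revh j i hj.symm
  have hn3 : ¬ ∃ j, S.G.rev (S.h i) = S.G.rev (S.f j) := by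
    rintro ⟨j, hj⟩; exact S.ne_f_h j i (rev_inj hj).symm
  have hex : ∃ j, S.G.rev (S.h i) = S.G.rev (S.h j) := ⟨i, rfl⟩
  rw [tauE, dif_neg hn1, dif_neg hn2, dif_neg hn3, dif_pos hex]
  exact congrArg (fun j => S.G.rev (S.f j)) (S.h_inj (rev_inj hex.choose_spec)).symm

lemma tauE_g (i : ZMod S.n) : tauE S (S.g i) = S.G.rev (S.g i) := by
  have hn1 : ¬ ∃ j, S.g i = S.f j := by rintro ⟨j, hj⟩; exact S.ne_f_g j i hj.symm
  have hn2 : ¬ ∃ j, S.g i = S.h j := by rintro ⟨j, hj⟩; exact S.ne_h_g j i hj.symm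
  have hn3 : ¬ ∃ j, S.g i = S.G.rev (S.f j) := by
    rintro ⟨j, hj⟩; exact S.ne_g_revf i j hj
  have hn4 : ¬ ∃ j, S.g i = S.G.rev (S.h j) := by
    rintro ⟨j, hj⟩; exact S.ne_g_revh i j hj
  have hex : ∃ j, S.g i = S.g j := ⟨i, rfl⟩
  rw [tauE, dif_neg hn1, dif_neg hn2, dif_neg hn3, dif_neg hn4, dif_pos hex]
  exact congrArg (fun j => S.G.rev (S.g j)) (S.g_inj hex.choose_spec).symm

lemma tauE_revg (i : ZMod S.n) : tauE S (S.G.rev (S.g i)) = S.g i := by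
  have hn1 : ¬ ∃ j, S.G.rev (S.g i) = S.f j := by
    rintro ⟨j, hj⟩; exact S.ne_f_revg j i hj.symm
  have hn2 : ¬ ∃ j, S.G.rev (S.g i) = S.h j := by
    rintro ⟨j, hj⟩; exact S.ne_h_revg j i hj.symm
  have hn3 : ¬ ∃ j, S.G.rev (S.g i) = S.G.rev (S.f j) := by
    rintro ⟨j, hj⟩; exact S.ne_f_g j i (rev_inj hj).symm
  have hn4 : ¬ ∃ j, S.G.rev (S.g i) = S.G.rev (S.h j) := by
    rintro ⟨j, hj⟩; exact S.ne_h_g j i (rev_inj hj).symm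
  have hn5 : ¬ ∃ j, S.G.rev (S.g i) = S.g j := by
    rintro ⟨j, hj⟩; exact S.ne_g_revg j i hj.symm
  have hex : ∃ j, S.G.rev (S.g i) = S.G.rev (S.g j) := ⟨i, rfl⟩
  rw [tauE, dif_neg hn1, dif_neg hn2, dif_neg hn3, dif_neg hn4, dif_neg hn5,
    dif_pos hex]
  exact congrArg S.g (S.g_inj (rev_inj hex.choose_spec)).symm

lemma tauE_invol : Function.Involutive (tauE S) := by
  intro E
  obtain ⟨i, hE | hE | hE | hE | hE | hE⟩ := S.edge_cases E <;> subst hE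
  · rw [tauE_f, tauE_h]
  · rw [tauE_h, tauE_f]
  · rw [tauE_g, tauE_revg]
  · rw [tauE_revf, tauE_revh]
  · rw [tauE_revh, tauE_revf]
  · rw [tauE_revg, tauE_g]

/-- The fiberwise flip on vertices. -/
noncomputable def tauV (S : Section7) (w : S.G.V) : S.G.V :=
  if h : ∃ j, w = S.G.src (S.f j) then S.G.src (S.h h.choose)
  else if h : ∃ j, w = S.G.src (S.h j) then S.G.src (S.f h.choose)
  else w

lemma tauV_p (i : ZMod S.n) : tauV S (S.G.src (S.f i)) = S.G.src (S.h i) := by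
  have hex : ∃ j, S.G.src (S.f i) = S.G.src (S.f j) := ⟨i, rfl⟩
  rw [tauV, dif_pos hex]
  exact congrArg (fun j => S.G.src (S.h j)) (S.p_inj hex.choose_spec).symm

lemma tauV_q (i : ZMod S.n) : tauV S (S.G.src (S.h i)) = S.G.src (S.f i) := by
  have hn1 : ¬ ∃ j, S.G.src (S.h i) = S.G.src (S.f j) := by
    rintro ⟨j, hj⟩; exact S.p_ne_q j i hj.symm
  have hex : ∃ j, S.G.src (S.h i) = S.G.src (S.h j) := ⟨i, rfl⟩
  rw [tauV, dif_neg hn1, dif_pos hex]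
  exact congrArg (fun j => S.G.src (S.f j)) (S.q_inj hex.choose_spec).symm

lemma tauV_invol : Function.Involutive (tauV S) := by
  intro w
  obtain ⟨i, hw | hw⟩ := S.vertex_cases w <;> subst hw
  · rw [tauV_p, tauV_q]
  · rw [tauV_q, tauV_p]

lemma tau_src_comm (E : S.G.E) : S.G.src (tauE S E) = tauV S (S.G.src E) := by
  obtain ⟨i, hE | hE | hE | hE | hE | hE⟩ := S.edge_cases E <;> subst hE
  · rw [tauE_f, tauV_p]
  · rw [tauE_h, tauV_q]
  · rw [tauE_g, S.G.src_rev, S.g_dst, S.g_src, tauV_p]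
  · rw [tauE_revf, S.G.src_rev, S.G.src_rev]
    by_cases hi1 : i + 1 = 0
    · have hi' : i = -1 := eq_neg_of_add_eq_zero_left hi1
      subst hi'
      rw [S.twist_f, S.twist_h, tauV_q]
    · rw [S.chain_f i hi1, S.chain_h i hi1, tauV_p]
  · rw [tauE_revh, S.G.src_rev, S.G.src_rev]
    by_cases hi1 : i + 1 = 0
    · have hi' : i = -1 := eq_neg_of_add_eq_zero_left hi1
      subst hi'
      rw [S.twist_f, S.twist_h, tauV_p]
    · rw [S.chain_f i hi1, S.chain_h i hi1, tauV_q]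
  · rw [tauE_revg, S.G.src_rev, S.g_dst, S.g_src, tauV_q]

lemma tau_rev_comm (E : S.G.E) : tauE S (S.G.rev E) = S.G.rev (tauE S E) := by
  obtain ⟨i, hE | hE | hE | hE | hE | hE⟩ := S.edge_cases E <;> subst hE
  · rw [tauE_f, tauE_revf]
  · rw [tauE_h, tauE_revh]
  · rw [tauE_g, tauE_revg, S.G.rev_rev]
  · rw [tauE_revf, S.G.rev_rev, tauE_f, S.G.rev_rev]
  · rw [tauE_revh, S.G.rev_rev, tauE_h, S.G.rev_rev]
  · rw [tauE_revg, S.G.rev_rev, tauE_g]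

lemma tau_dst_comm (E : S.G.E) : S.G.dst (tauE S E) = tauV S (S.G.dst E) := by
  rw [← S.G.src_rev (tauE S E), ← tau_rev_comm, tau_src_comm, S.G.src_rev]

/-- `τ` as an edge permutation. -/
noncomputable def tauEquivE (S : Section7) : S.G.E ≃ S.G.E :=
  Function.Involutive.toPerm _ (tauE_invol (S := S))

/-- `τ` as a vertex permutation. -/
noncomputable def tauEquivV (S : Section7) : S.G.V ≃ S.G.V :=
  Function.Involutive.toPerm _ (tauV_invol (S := S))

end Section7

/-- Scaling by a unit as a linear equivalence. -/
def smulUnitEquiv (σ : ℤ) (hσ : σ = 1 ∨ σ = -1) : Zm 2 ≃ₗ[ℤ] Zm 2 where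
  toFun v := σ • v
  invFun v := σ • v
  map_add' x y := smul_add σ x y
  map_smul' r v := smul_comm σ r v
  left_inv v := by change σ • σ • v = v; rw [smul_smul, pmone_sq hσ, one_smul]
  right_inv v := by change σ • σ • v = v; rw [smul_smul, pmone_sq hσ, one_smul]

namespace Section7

variable {S : Section7}

/-- An isomorphism of signed structures on `Γ` via the identity graph map. -/
noncomputable def isoId (α1 α2 : S.G.E → Zm 2) (σ : ℤ) (hσ : σ = 1 ∨ σ = -1)
    (hl : ∀ e, α2 e = σ • α1 e) : SignedGKMIso S.G α1 S.G α2 where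
  fV := Equiv.refl _
  fE := Equiv.refl _
  φ := smulUnitEquiv σ hσ
  src_comm e := rfl
  dst_comm e := rfl
  rev_comm e := rfl
  lab e := hl e

/-- An isomorphism of signed structures on `Γ` via the fiberwise flip. -/
noncomputable def isoTau (α1 α2 : S.G.E → Zm 2) (σ : ℤ) (hσ : σ = 1 ∨ σ = -1)
    (hl : ∀ e, α2 (tauE S e) = σ • α1 e) : SignedGKMIso S.G α1 S.G α2 where
  fV := tauEquivV S
  fE := tauEquivE S
  φ := smulUnitEquiv σ hσ
  src_comm e := tau_src_comm e
  dst_comm e := tau_dst_comm e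
  rev_comm e := (tau_rev_comm e).symm ▸ rfl
  lab e := hl e

end Section7

end Statement18Tau

section Statement18AlphaII

namespace Section7

variable {S : Section7}

lemma aII_of {ed : S.G.E}
    (h : ∃ i : ZMod S.n, Odd i.val ∧
      (ed = S.f i ∨ ed = S.h i ∨ ed = S.G.rev (S.f i) ∨ ed = S.G.rev (S.h i))) :
    S.alphaII ed = -S.aG ed := by
  unfold Section7.alphaII
  rw [if_pos h]

lemma aII_of_not {ed : S.G.E}
    (h : ¬∃ i : ZMod S.n, Odd i.val ∧
      (ed = S.f i ∨ ed = S.h i ∨ ed = S.G.rev (S.f i) ∨ ed = S.G.rev (S.h i))) :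
    S.alphaII ed = S.aG ed := by
  unfold Section7.alphaII
  rw [if_neg h]

lemma aII_f (i : ZMod S.n) :
    S.alphaII (S.f i) = (if Odd i.val then (-1 : ℤ) else 1) • S.gam i := by
  by_cases hodd : Odd i.val
  · rw [aII_of ⟨i, hodd, Or.inl rfl⟩, if_pos hodd, S.aG_f, neg_one_smul]
  · rw [aII_of_not ?_, if_neg hodd, one_smul, S.aG_f]
    rintro ⟨j, hj, hc | hc | hc | hc⟩
    · exact hodd (S.f_inj hc ▸ hj)
    · exact S.ne_f_h i j hc
    · exact S.ne_f_revf i j hc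
    · exact S.ne_f_revh i j hc

lemma aII_h (i : ZMod S.n) :
    S.alphaII (S.h i) = (if Odd i.val then (-1 : ℤ) else 1) • S.gam i := by
  by_cases hodd : Odd i.val
  · rw [aII_of ⟨i, hodd, Or.inr (Or.inl rfl)⟩, if_pos hodd, S.aG_h, neg_one_smul]
  · rw [aII_of_not ?_, if_neg hodd, one_smul, S.aG_h]
    rintro ⟨j, hj, hc | hc | hc | hc⟩
    · exact S.ne_f_h j i hc.symm
    · exact hodd (S.h_inj hc ▸ hj)
    · exact S.ne_h_revf i j hc
    · exact S.ne_h_revh i j hc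

lemma aII_g (i : ZMod S.n) : S.alphaII (S.g i) = S.aG (S.g i) := by
  rw [aII_of_not ?_]
  rintro ⟨j, hj, hc | hc | hc | hc⟩
  · exact S.ne_f_g j i hc.symm
  · exact S.ne_h_g j i hc.symm
  · exact S.ne_g_revf i j hc
  · exact S.ne_g_revh i j hc

lemma aII_revg (i : ZMod S.n) : S.alphaII (S.G.rev (S.g i)) = -S.aG (S.g i) := by
  rw [aII_of_not ?_, S.aG_rev]
  rintro ⟨j, hj, hc | hc | hc | hc⟩
  · exact S.ne_f_revg j i hc.symm
  · exact S.ne_h_revg j i hc.symm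
  · exact S.ne_f_g j i (rev_inj hc).symm
  · exact S.ne_h_g j i (rev_inj hc).symm

lemma aII_revf (i : ZMod S.n) :
    S.alphaII (S.G.rev (S.f i)) = -(S.alphaII (S.f i)) := by
  by_cases hodd : Odd i.val
  · rw [aII_of ⟨i, hodd, Or.inr (Or.inr (Or.inl rfl))⟩, aII_of ⟨i, hodd, Or.inl rfl⟩,
      S.aG_rev]
  · rw [aII_of_not ?_, aII_of_not ?_, S.aG_rev]
    · rintro ⟨j, hj, hc | hc | hc | hc⟩
      · exact hodd (S.f_inj hc ▸ hj)
      · exact S.ne_f_h i j hc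
      · exact S.ne_f_revf i j hc
      · exact S.ne_f_revh i j hc
    · rintro ⟨j, hj, hc | hc | hc | hc⟩
      · exact S.ne_f_revf j i hc.symm
      · exact S.ne_h_revf j i hc.symm
      · exact hodd (S.f_inj (rev_inj hc) ▸ hj)
      · exact S.ne_f_h i j (rev_inj hc)

lemma aII_revh (i : ZMod S.n) :
    S.alphaII (S.G.rev (S.h i)) = -(S.alphaII (S.h i)) := by
  by_cases hodd : Odd i.val
  · rw [aII_of ⟨i, hodd, Or.inr (Or.inr (Or.inr rfl))⟩,
      aII_of ⟨i, hodd, Or.inr (Or.inl rfl)⟩, S.aG_rev]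
  · rw [aII_of_not ?_, aII_of_not ?_, S.aG_rev]
    · rintro ⟨j, hj, hc | hc | hc | hc⟩
      · exact S.ne_f_h j i hc.symm
      · exact hodd (S.h_inj hc ▸ hj)
      · exact S.ne_h_revf i j hc
      · exact S.ne_h_revh i j hc
    · rintro ⟨j, hj, hc | hc | hc | hc⟩
      · exact S.ne_f_revh j i hc.symm
      · exact S.ne_h_revh j i hc.symm
      · exact S.ne_f_h j i (rev_inj hc).symm
      · exact hodd (S.h_inj (rev_inj hc) ▸ hj)

end Section7

lemma unit_smul_smul {σ τ : ℤ} (h : σ * τ = 1) (v : Zm 2) : σ • τ • v = v := by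
  rw [smul_smul, h, one_smul]

lemma unit_smul_smul_neg {σ τ : ℤ} (h : σ * τ = -1) (v : Zm 2) : σ • τ • v = -v := by
  rw [smul_smul, h, neg_one_smul]

end Statement18AlphaII

/-- in the Section 7 setting with `n ≠ 4`, every signed GKM structure
compatible with the underlying unsigned GKM graph of `Γ` is, up to isomorphism, one
of at most three: (I) `Γ` itself; (II) (only for `n` even) the structure with every
second pair of basic-edge weights flipped; (III) (only if all `k_i = ±1`) the unique
structure in which the two basic edges over a base edge never carry the same weight. -/
theorem statement18 (S : Section7) (hn4 : S.n ≠ 4)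
    (α' : S.G.E → Zm 2)
    (hcompat : ∃ C : Connection S.G, SignedCompat S.G α' C)
    (hsame : ∀ ed, pm (α' ed) = pm (S.aG ed)) :
    Nonempty (SignedGKMIso S.G α' S.G S.aG) ∨
    (Even S.n ∧ Nonempty (SignedGKMIso S.G α' S.G S.alphaII)) ∨
    ((∀ i, S.k i = 1 ∨ S.k i = -1) ∧
      (∀ i, α' (S.f i) ≠ α' (S.h i)) ∧
      ∀ α'' : S.G.E → Zm 2, (∃ C : Connection S.G, SignedCompat S.G α'' C) →
        (∀ ed, pm (α'' ed) = pm (S.aG ed)) → (∀ i, α'' (S.f i) ≠ α'' (S.h i)) →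
        Nonempty (SignedGKMIso S.G α' S.G α'')) := by
  classical
  obtain ⟨X, hXal⟩ : ∃ X : Section7.SData S, X.al = α' :=
    ⟨Section7.mkSData S α' hcompat hsame, rfl⟩
  have ha' : ∀ i, α' (S.f i) = X.a i • S.gam i := by
    intro i; rw [← hXal]; exact X.ha i
  have hb' : ∀ i, α' (S.h i) = X.b i • S.gam i := by
    intro i; rw [← hXal]; exact X.hb i
  have hc' : ∀ i, α' (S.g i) = X.c i • S.aG (S.g i) := by
    intro i; rw [← hXal]; exact X.hc i
  have hrev' : ∀ ed, α' (S.G.rev ed) = -α' ed := by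
    intro ed; rw [← hXal]; exact X.alrev ed
  have hsqa := pmone_sq (X.hau 0)
  rcases pmone_mul (X.hau 0) (X.hbu 0) with hd0 | hd0
  · -- aligned case
    have hal : ∀ i, X.b i = X.a i := fun i =>
      pmone_eq_of_mul_one (X.hau i) (X.hbu i) (by rw [X.d_const i, hd0])
    have hcc := X.align_c_const hal
    by_cases hpar : X.a 1 = X.a 0
    · -- type I
      left
      have hone : ∀ i, X.a i = X.a 0 := by
        refine zmod_all _ (fun m _ => ?_)
        rw [X.align_a_parity hal m]
        split
        · rfl
        · exact hpar
      by_cases hδ : X.c 0 = X.a 0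
      · refine ⟨Section7.isoId α' S.aG (X.a 0) (X.hau 0) ?_⟩
        intro e
        obtain ⟨i, hE | hE | hE | hE | hE | hE⟩ := S.edge_cases e <;> subst hE
        · rw [ha' i, hone i, S.aG_f, unit_smul_smul hsqa]
        · rw [hb' i, hal i, hone i, S.aG_h, unit_smul_smul hsqa]
        · rw [hc' i, hcc i, hδ, unit_smul_smul hsqa]
        · rw [S.aG_rev, hrev', ha' i, hone i, S.aG_f, smul_neg, unit_smul_smul hsqa]
        · rw [S.aG_rev, hrev', hb' i, hal i, hone i, S.aG_h, smul_neg,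
            unit_smul_smul hsqa]
        · rw [S.aG_rev, hrev', hc' i, hcc i, hδ, smul_neg, unit_smul_smul hsqa]
      · have hδ' : X.c 0 = -X.a 0 := pmone_opp (X.hau 0) (X.hcu 0) hδ
        have hprod : X.a 0 * X.c 0 = -1 := by
          rw [hδ']; linear_combination -hsqa
        refine ⟨Section7.isoTau α' S.aG (X.a 0) (X.hau 0) ?_⟩
        intro e
        obtain ⟨i, hE | hE | hE | hE | hE | hE⟩ := S.edge_cases e <;> subst hE
        · rw [Section7.tauE_f, ha' i, hone i, S.aG_h, unit_smul_smul hsqa]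
        · rw [Section7.tauE_h, hb' i, hal i, hone i, S.aG_f, unit_smul_smul hsqa]
        · rw [Section7.tauE_g, S.aG_rev, hc' i, hcc i, unit_smul_smul_neg hprod]
        · rw [Section7.tauE_revf, S.aG_rev, S.aG_h, hrev', ha' i, hone i, smul_neg,
            unit_smul_smul hsqa]
        · rw [Section7.tauE_revh, S.aG_rev, S.aG_f, hrev', hb' i, hal i, hone i,
            smul_neg, unit_smul_smul hsqa]
        · rw [Section7.tauE_revg, hrev', hc' i, hcc i, smul_neg,
            unit_smul_smul_neg hprod, neg_neg]
    · -- type II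
      right; left
      have hpar' : X.a 1 = -X.a 0 := pmone_opp (X.hau 0) (X.hau 1) hpar
      have heven : Even S.n := by
        by_contra hodd
        exact hpar (X.align_a_odd hal (Nat.not_even_iff_odd.mp hodd) 1)
      have haI : ∀ i, X.a i = X.a 0 * (if Odd i.val then (-1 : ℤ) else 1) := by
        intro i
        have h2 : X.a i = X.a ((i.val : ℕ) : ZMod S.n) := by
          rw [ZMod.natCast_val, ZMod.cast_id]
        rw [h2, X.align_a_parity hal i.val]
        by_cases hodd : Odd i.val
        · rw [if_neg (by rwa [Nat.not_even_iff_odd]), if_pos hodd, hpar']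
          ring
        · rw [if_pos (Nat.not_odd_iff_even.mp hodd), if_neg hodd]
          ring
      refine ⟨heven, ?_⟩
      by_cases hδ : X.c 0 = X.a 0
      · refine ⟨Section7.isoId α' S.alphaII (X.a 0) (X.hau 0) ?_⟩
        intro e
        obtain ⟨i, hE | hE | hE | hE | hE | hE⟩ := S.edge_cases e <;> subst hE
        · rw [S.aII_f, ha' i, haI i, smul_smul, ← mul_assoc, hsqa, one_mul]
        · rw [S.aII_h, hb' i, hal i, haI i, smul_smul, ← mul_assoc, hsqa, one_mul]
        · rw [S.aII_g, hc' i, hcc i, hδ, unit_smul_smul hsqa]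
        · rw [S.aII_revf, S.aII_f, hrev', ha' i, haI i, smul_neg, smul_smul,
            ← mul_assoc, hsqa, one_mul]
        · rw [S.aII_revh, S.aII_h, hrev', hb' i, hal i, haI i, smul_neg, smul_smul,
            ← mul_assoc, hsqa, one_mul]
        · rw [S.aII_revg, hrev', hc' i, hcc i, hδ, smul_neg, unit_smul_smul hsqa]
      · have hδ' : X.c 0 = -X.a 0 := pmone_opp (X.hau 0) (X.hcu 0) hδ
        have hprod : X.a 0 * X.c 0 = -1 := by
          rw [hδ']; linear_combination -hsqa
        refine ⟨Section7.isoTau α' S.alphaII (X.a 0) (X.hau 0) ?_⟩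
        intro e
        obtain ⟨i, hE | hE | hE | hE | hE | hE⟩ := S.edge_cases e <;> subst hE
        · rw [Section7.tauE_f, S.aII_h, ha' i, haI i, smul_smul, ← mul_assoc, hsqa,
            one_mul]
        · rw [Section7.tauE_h, S.aII_f, hb' i, hal i, haI i, smul_smul, ← mul_assoc,
            hsqa, one_mul]
        · rw [Section7.tauE_g, S.aII_revg, hc' i, hcc i, unit_smul_smul_neg hprod]
        · rw [Section7.tauE_revf, S.aII_revh, S.aII_h, hrev', ha' i, haI i, smul_neg,
            smul_smul, ← mul_assoc, hsqa, one_mul]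
        · rw [Section7.tauE_revh, S.aII_revf, S.aII_f, hrev', hb' i, hal i, haI i,
            smul_neg, smul_smul, ← mul_assoc, hsqa, one_mul]
        · rw [Section7.tauE_revg, S.aII_g, hrev', hc' i, hcc i, smul_neg,
            unit_smul_smul_neg hprod, neg_neg]
  · -- type III
    have hanti : ∀ i, X.b i = -X.a i := by
      intro i
      refine pmone_opp (X.hau i) (X.hbu i) ?_
      intro heq
      have h2 := X.d_const i
      rw [heq, pmone_sq (X.hau i), hd0] at h2
      omega
    right; right
    have hku : ∀ i, S.k i = 1 ∨ S.k i = -1 := X.anti_kunit hanti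
    refine ⟨hku, ?_, ?_⟩
    · intro i heq
      rw [ha' i, hb' i, hanti i] at heq
      apply S.gam_ne_zero i
      funext t
      have hcomp : X.a i * S.gam i t = -X.a i * S.gam i t := by
        have := congrFun heq t
        simpa [Pi.smul_apply, smul_eq_mul] using this
      have hgoal : S.gam i t = 0 := by
        rcases X.hau i with hA | hA <;> rw [hA] at hcomp <;> omega
      exact hgoal
    · intro α'' hcompat'' hsame'' hne''
      obtain ⟨Y, hYal⟩ : ∃ Y : Section7.SData S, Y.al = α'' :=
        ⟨Section7.mkSData S α'' hcompat'' hsame'', rfl⟩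
      have ha'' : ∀ i, α'' (S.f i) = Y.a i • S.gam i := by
        intro i; rw [← hYal]; exact Y.ha i
      have hb'' : ∀ i, α'' (S.h i) = Y.b i • S.gam i := by
        intro i; rw [← hYal]; exact Y.hb i
      have hc'' : ∀ i, α'' (S.g i) = Y.c i • S.aG (S.g i) := by
        intro i; rw [← hYal]; exact Y.hc i
      have hrev'' : ∀ ed, α'' (S.G.rev ed) = -α'' ed := by
        intro ed; rw [← hYal]; exact Y.alrev ed
      have hanti'' : ∀ i, Y.b i = -Y.a i := by
        intro i
        refine pmone_opp (Y.hau i) (Y.hbu i) ?_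
        intro heq
        exact hne'' i (by rw [ha'' i, hb'' i, heq])
      have hres := kernel S.hn S.k X.c Y.c (X.a 0 * S.k 0) (Y.a 0 * S.k 0)
        hku (X.anti_eps_unit hanti) (Y.anti_eps_unit hanti'')
        X.hcu Y.hcu (X.anti_sys hanti) (Y.anti_sys hanti'') (S.nobad hku)
      have haX := X.anti_a_form hanti
      have haY := Y.anti_a_form hanti''
      rcases hres with ⟨hee, hcc2⟩ | ⟨hee, hcc2⟩
      · have hfun : ∀ e, α'' e = (1 : ℤ) • α' e := by
          intro e
          rw [one_smul]
          obtain ⟨i, hE | hE | hE | hE | hE | hE⟩ := S.edge_cases e <;> subst hE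
          · rw [ha'' i, ha' i, haY i, hee, ← haX i]
          · rw [hb'' i, hb' i, hanti'' i, hanti i, haY i, hee, ← haX i]
          · rw [hc'' i, hc' i, hcc2 i]
          · rw [hrev'', hrev', ha'' i, ha' i, haY i, hee, ← haX i]
          · rw [hrev'', hrev', hb'' i, hb' i, hanti'' i, hanti i, haY i, hee, ← haX i]
          · rw [hrev'', hrev', hc'' i, hc' i, hcc2 i]
        exact ⟨Section7.isoId α' α'' 1 (Or.inl rfl) hfun⟩
      · have hfun : ∀ e, α'' e = (-1 : ℤ) • α' e := by
          intro e
          rw [neg_one_smul]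
          obtain ⟨i, hE | hE | hE | hE | hE | hE⟩ := S.edge_cases e <;> subst hE
          · rw [ha'' i, ha' i, haY i, hee, haX i]
            module
          · rw [hb'' i, hb' i, hanti'' i, hanti i, haY i, hee, haX i]
            module
          · rw [hc'' i, hc' i, hcc2 i]
            module
          · rw [hrev'', hrev', ha'' i, ha' i, haY i, hee, haX i]
            module
          · rw [hrev'', hrev', hb'' i, hb' i, hanti'' i, hanti i, haY i, hee, haX i]
            module
          · rw [hrev'', hrev', hc'' i, hc' i, hcc2 i]
            module
        exact ⟨Section7.isoId α' α'' (-1) (Or.inr rfl) hfun⟩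

end GKMPaper
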